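/- arXiv:1411.4086 — 3 statements merged into one kernel-verified Lean document; each statement's English description precedes it below -/
import Mathlib

section
/- Under the Dawid–Skene model with a decomposable aggregation rule: if t̃ ≤ 0, then the mean error rate satisfies E[E_N] ≥ 1 − min{ exp(−t̃²/2), exp(−t̃²/(2·(σ² − c·t̃/3))) }. -/
open MeasureTheory ProbabilityTheory Real

noncomputable section

namespace CrowdDS

/-- Conditional law of the label `Z i j` (valued in `Fin (L+1)`, `0` = missing) given the
true label `y j = k`, under the general Dawid–Skene model with assignment probabilities `q`
and confusion matrices `p` (where `p i k h` is the probability of reporting label `h.succ`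
given true label `k`). -/
def condLaw {M N L : ℕ} (q : Fin M → Fin N → ℝ) (p : Fin M → Fin L → Fin L → ℝ)
    (i : Fin M) (j : Fin N) (k : Fin L) (h : Fin (L + 1)) : ℝ :=
  if hz : h = 0 then 1 - q i j else q i j * p i k (h.pred hz)

/-- The normalizing quantity `N̄`. -/
def nbar {M L : ℕ} (f : Fin M → Fin L → Fin (L + 1) → ℝ) : ℝ :=
  Real.sqrt (∑ i, (sSup {x : ℝ | ∃ k l h : Fin L, k ≠ l ∧
    x = |f i k h.succ - f i l h.succ|}) ^ 2)

/-- Expected gap `Δ_j(k,l)` of the aggregated scores. -/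
def gap {M N L : ℕ} (f : Fin M → Fin L → Fin (L + 1) → ℝ) (a : Fin L → ℝ)
    (q : Fin M → Fin N → ℝ) (p : Fin M → Fin L → Fin L → ℝ)
    (j : Fin N) (k l : Fin L) : ℝ :=
  (∑ i, ∑ h : Fin L, q i j * (f i k h.succ - f i l h.succ) * p i k h) + (a k - a l)

/-- `τ_j^min`. -/
def tauMin {M N L : ℕ} (f : Fin M → Fin L → Fin (L + 1) → ℝ) (a : Fin L → ℝ)
    (q : Fin M → Fin N → ℝ) (p : Fin M → Fin L → Fin L → ℝ) (j : Fin N) : ℝ :=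
  sInf {x : ℝ | ∃ k l : Fin L, k ≠ l ∧ x = gap f a q p j k l / nbar f}

/-- `τ_j^max`. -/
def tauMax {M N L : ℕ} (f : Fin M → Fin L → Fin (L + 1) → ℝ) (a : Fin L → ℝ)
    (q : Fin M → Fin N → ℝ) (p : Fin M → Fin L → Fin L → ℝ) (j : Fin N) : ℝ :=
  sSup {x : ℝ | ∃ k l : Fin L, k ≠ l ∧ x = gap f a q p j k l / nbar f}

/-- `t̄ = min_j τ_j^min`. -/
def tbar {M N L : ℕ} (f : Fin M → Fin L → Fin (L + 1) → ℝ) (a : Fin L → ℝ)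
    (q : Fin M → Fin N → ℝ) (p : Fin M → Fin L → Fin L → ℝ) : ℝ :=
  sInf {x : ℝ | ∃ j : Fin N, x = tauMin f a q p j}

/-- `t̃ = max_j τ_j^max`. -/
def ttil {M N L : ℕ} (f : Fin M → Fin L → Fin (L + 1) → ℝ) (a : Fin L → ℝ)
    (q : Fin M → Fin N → ℝ) (p : Fin M → Fin L → Fin L → ℝ) : ℝ :=
  sSup {x : ℝ | ∃ j : Fin N, x = tauMax f a q p j}

/-- The constant `c`. -/
def cConst {M L : ℕ} (f : Fin M → Fin L → Fin (L + 1) → ℝ) : ℝ :=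
  (1 / nbar f) * sSup {x : ℝ | ∃ (i : Fin M) (k l h : Fin L), k ≠ l ∧
    x = |f i k h.succ - f i l h.succ|}

/-- The variance proxy `σ²`. -/
def sigmaSq {M N L : ℕ} (f : Fin M → Fin L → Fin (L + 1) → ℝ)
    (q : Fin M → Fin N → ℝ) (p : Fin M → Fin L → Fin L → ℝ) : ℝ :=
  (1 / (nbar f) ^ 2) * sSup {x : ℝ | ∃ (j : Fin N) (k l : Fin L), k ≠ l ∧
    x = ∑ i, ∑ h : Fin L, q i j * (f i k h.succ - f i l h.succ) ^ 2 * p i k h}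

/-- The error rate `E_N`. -/
def errRate {Ω : Type*} {N L : ℕ} (y yhat : Fin N → Ω → Fin L) (ω : Ω) : ℝ :=
  (N : ℝ)⁻¹ * ∑ j, if yhat j ω ≠ y j ω then (1 : ℝ) else 0

/-- `φ(x) = exp(−x²/2)`. -/
def phi (x : ℝ) : ℝ := Real.exp (-x ^ 2 / 2)

/-- Kullback–Leibler divergence between Bernoulli distributions. -/
def klBer (x y : ℝ) : ℝ := x * Real.log (x / y) + (1 - x) * Real.log ((1 - x) / (1 - y))

end CrowdDS

lemma aux_log_ineq (q u : ℝ) (h0 : 0 ≤ q) (h1 : q ≤ 1) :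
    Real.log (1 - q + q * Real.exp u) ≤ q * u + u ^ 2 / 8 := by
  have hD : ∀ x : ℝ, 0 < 1 - q + q * Real.exp x := by
    intro x
    rcases eq_or_lt_of_le h0 with h | h
    · simp [← h]
    · have := Real.exp_pos x
      nlinarith
  set g : ℝ → ℝ := fun u => q * u + u ^ 2 / 8 - Real.log (1 - q + q * Real.exp u) with hgdef
  set g1 : ℝ → ℝ := fun u => q + u / 4 - q * Real.exp u / (1 - q + q * Real.exp u) with hg1def
  have hDd : ∀ x : ℝ, HasDerivAt (fun u => 1 - q + q * Real.exp u) (q * Real.exp x) x := by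
    intro x
    simpa using (((Real.hasDerivAt_exp x).const_mul q).const_add (1 - q))
  have hg : ∀ x : ℝ, HasDerivAt g (g1 x) x := by
    intro x
    have h1' : HasDerivAt (fun u : ℝ => q * u + u ^ 2 / 8) (q + 2 * x / 8) x := by
      have := ((hasDerivAt_id x).const_mul q).add ((hasDerivAt_pow 2 x).div_const 8)
      exact this.congr_deriv (by norm_num)
    have h2' : HasDerivAt (fun u => Real.log (1 - q + q * Real.exp u))
        (q * Real.exp x / (1 - q + q * Real.exp x)) x := (hDd x).log (hD x).ne'
    exact (h1'.sub h2').congr_deriv (by simp only [hg1def]; ring)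
  have hg1 : ∀ x : ℝ, HasDerivAt g1
      (1 / 4 - (q * Real.exp x * (1 - q + q * Real.exp x) - q * Real.exp x * (q * Real.exp x)) /
        (1 - q + q * Real.exp x) ^ 2) x := by
    intro x
    have h1' : HasDerivAt (fun u : ℝ => q + u / 4) (1 / 4) x := by
      simpa using ((hasDerivAt_id x).div_const 4).const_add q
    have h2' : HasDerivAt (fun u => q * Real.exp u / (1 - q + q * Real.exp u))
        ((q * Real.exp x * (1 - q + q * Real.exp x) - q * Real.exp x * (q * Real.exp x)) /
          (1 - q + q * Real.exp x) ^ 2) x :=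
      ((Real.hasDerivAt_exp x).const_mul q).div (hDd x) (hD x).ne'
    exact h1'.sub h2'
  have hg1mono : Monotone g1 := by
    apply monotone_of_deriv_nonneg
    · exact fun x => (hg1 x).differentiableAt
    · intro x
      rw [(hg1 x).deriv]
      have hDx := hD x
      have hex := Real.exp_pos x
      rw [sub_nonneg, div_le_iff₀ (by positivity)]
      nlinarith [sq_nonneg (1 - q - q * Real.exp x), sq_nonneg (1 - q + q * Real.exp x)]
  have hg10 : g1 0 = 0 := by
    simp [hg1def]
  have hgc : Continuous g := by
    have : Differentiable ℝ g := fun x => (hg x).differentiableAt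
    exact this.continuous
  have hkey : ∀ u : ℝ, 0 ≤ g u := by
    have hg0 : g 0 = 0 := by simp [hgdef]
    intro u
    rcases le_total u 0 with hu | hu
    · have hanti : AntitoneOn g (Set.Iic 0) := by
        apply antitoneOn_of_deriv_nonpos (convex_Iic 0) (hgc.continuousOn)
        · intro x _; exact (hg x).differentiableAt.differentiableWithinAt
        · intro x hx
          rw [interior_Iic] at hx
          rw [(hg x).deriv]
          have := hg1mono (le_of_lt hx)
          rw [hg10] at this; exact this
      have := hanti hu (Set.self_mem_Iic) hu
      rw [hg0] at this; exact this
    · have hmono : MonotoneOn g (Set.Ici 0) := by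
        apply monotoneOn_of_deriv_nonneg (convex_Ici 0) (hgc.continuousOn)
        · intro x _; exact (hg x).differentiableAt.differentiableWithinAt
        · intro x hx
          rw [interior_Ici] at hx
          rw [(hg x).deriv]
          have := hg1mono (le_of_lt hx)
          rw [hg10] at this; exact this
      have := hmono (Set.self_mem_Ici) hu hu
      rw [hg0] at this; exact this
  have := hkey u
  simp only [hgdef] at this
  linarith

lemma aux_exp_quad (u : ℝ) (hu : u ≤ 0) : Real.exp u ≤ 1 + u + u ^ 2 / 2 := by
  set g : ℝ → ℝ := fun u => 1 + u + u ^ 2 / 2 - Real.exp u with hgdef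
  have hg : ∀ x : ℝ, HasDerivAt g (1 + x - Real.exp x) x := by
    intro x
    have h1 : HasDerivAt (fun u : ℝ => 1 + u + u ^ 2 / 2) (1 + 2 * x / 2) x := by
      have := ((hasDerivAt_id x).const_add 1).add ((hasDerivAt_pow 2 x).div_const 2)
      exact this.congr_deriv (by norm_num)
    have := h1.sub (Real.hasDerivAt_exp x)
    exact this.congr_deriv (by ring)
  have hdiff : Differentiable ℝ g := fun x => (hg x).differentiableAt
  have hanti : AntitoneOn g (Set.Iic 0) := by
    apply antitoneOn_of_deriv_nonpos (convex_Iic 0) hdiff.continuous.continuousOn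
    · intro x _; exact (hg x).differentiableAt.differentiableWithinAt
    · intro x _
      rw [(hg x).deriv]
      have := Real.add_one_le_exp x
      linarith
  have hg0 : g 0 = 0 := by simp [hgdef]
  have := hanti hu Set.self_mem_Iic hu
  rw [hg0] at this
  simp only [hgdef] at this
  linarith

lemma factorial_ge (n : ℕ) : (2 : ℝ) * 3 ^ n ≤ (n + 2).factorial := by
  induction n with
  | zero => norm_num
  | succ m ih =>
    have h1 : ((m + 3 : ℕ) : ℝ) ≥ 3 := by exact_mod_cast by omega
    have h2 : ((m + 1) + 2).factorial = (m + 3) * (m + 2).factorial := by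
      show (m + 3).factorial = _
      rw [Nat.factorial_succ]
    rw [h2, pow_succ]
    push_cast
    push_cast at h1
    nlinarith [ih, (Nat.cast_pos (α := ℝ)).mpr (Nat.factorial_pos (m + 2)),
      pow_nonneg (by norm_num : (0:ℝ) ≤ 3) m]

lemma aux_exp_taylor (u s : ℝ) (h : |u| ≤ s) (hs : s < 3) :
    Real.exp u - 1 - u ≤ u ^ 2 / (2 * (1 - s / 3)) := by
  have hs0 : 0 ≤ s := le_trans (abs_nonneg u) h
  have hden : 0 < 1 - s / 3 := by linarith
  rcases le_or_gt u 0 with hu | hu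
  · have := aux_exp_quad u hu
    have h2 : u ^ 2 / 2 ≤ u ^ 2 / (2 * (1 - s / 3)) := by
      apply div_le_div_of_nonneg_left (sq_nonneg u) (by positivity)
      nlinarith
    linarith
  · have hexp : Real.exp u = ∑' n : ℕ, u ^ n / n.factorial := by
      rw [Real.exp_eq_exp_ℝ, NormedSpace.exp_eq_tsum (𝕂 := ℝ)]
      simp [div_eq_inv_mul]
    have hsumm : Summable (fun n : ℕ => u ^ n / n.factorial) := Real.summable_pow_div_factorial u
    have hshift := Summable.sum_add_tsum_nat_add (f := fun n : ℕ => u ^ n / n.factorial) 2 hsumm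
    have htail : Real.exp u - 1 - u = ∑' n : ℕ, u ^ (n + 2) / (n + 2).factorial := by
      rw [hexp, ← hshift]
      simp [Finset.sum_range_succ]
      ring
    rw [htail]
    have hgeom : Summable (fun n : ℕ => u ^ 2 / 2 * (s / 3) ^ n) :=
      (summable_geometric_of_lt_one (by positivity) (by linarith)).mul_left _
    have hsumm2 : Summable (fun n : ℕ => u ^ (n + 2) / (n + 2).factorial) :=
      (summable_nat_add_iff 2).2 hsumm
    have hle : ∀ n : ℕ, u ^ (n + 2) / (n + 2).factorial ≤ u ^ 2 / 2 * (s / 3) ^ n := by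
      intro n
      have hfact := factorial_ge n
      have hpow : (0:ℝ) < 2 * 3 ^ n := by positivity
      calc u ^ (n + 2) / ((n + 2).factorial : ℝ) ≤ u ^ (n + 2) / (2 * 3 ^ n) := by
            apply div_le_div_of_nonneg_left (pow_nonneg hu.le _) hpow hfact
        _ = u ^ 2 * u ^ n / (2 * 3 ^ n) := by ring
        _ ≤ u ^ 2 * s ^ n / (2 * 3 ^ n) := by
            gcongr u ^ 2 * ?_ / (2 * 3 ^ n)
            exact pow_le_pow_left₀ hu.le (le_trans (le_abs_self u) h) n
        _ = u ^ 2 / 2 * (s / 3) ^ n := by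
            rw [div_pow]; ring
    calc (∑' n : ℕ, u ^ (n + 2) / (n + 2).factorial) ≤ ∑' n : ℕ, u ^ 2 / 2 * (s / 3) ^ n :=
          Summable.tsum_le_tsum hle hsumm2 hgeom
      _ = u ^ 2 / 2 * (1 - s / 3)⁻¹ := by
          rw [tsum_mul_left, tsum_geometric_of_lt_one (by positivity) (by linarith)]
      _ = u ^ 2 / (2 * (1 - s / 3)) := by
          field_simp

lemma aux_hoeffding_mgf {α : Type*} [Fintype α] [Nonempty α] (w X : α → ℝ)
    (hw0 : ∀ x, 0 ≤ w x) (hw1 : ∑ x, w x = 1) (lo hi t : ℝ)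
    (hX : ∀ x, X x ∈ Set.Icc lo hi) :
    ∑ x, w x * Real.exp (t * X x)
      ≤ Real.exp (t * (∑ x, w x * X x) + t ^ 2 * (hi - lo) ^ 2 / 8) := by
  have x0 : α := Classical.arbitrary α
  have hlohi : lo ≤ hi := le_trans (hX x0).1 (hX x0).2
  rcases eq_or_lt_of_le hlohi with heq | hlt
  · have hXx : ∀ x, X x = lo := fun x => le_antisymm (heq ▸ (hX x).2) (hX x).1
    have h1 : ∑ x, w x * Real.exp (t * X x) = Real.exp (t * lo) := by
      simp only [hXx]
      rw [← Finset.sum_mul, hw1, one_mul]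
    have h2 : ∑ x, w x * X x = lo := by
      simp only [hXx]
      rw [← Finset.sum_mul, hw1, one_mul]
    rw [h1, h2, ← heq]
    simp
  · set d := hi - lo with hd
    have hd0 : 0 < d := by simp [hd]; linarith
    set m := ∑ x, w x * X x with hm
    set A := Real.exp (t * lo) with hA
    set B := Real.exp (t * hi) with hB
    have step1 : ∀ x, Real.exp (t * X x) ≤ (hi - X x) / d * A + (X x - lo) / d * B := by
      intro x
      have ha : 0 ≤ (hi - X x) / d := by
        apply div_nonneg _ hd0.le; linarith [(hX x).2]
      have hb : 0 ≤ (X x - lo) / d := by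
        apply div_nonneg _ hd0.le; linarith [(hX x).1]
      have hab : (hi - X x) / d + (X x - lo) / d = 1 := by
        field_simp
        rw [hd]; ring
      have := convexOn_exp.2 (Set.mem_univ (t * lo)) (Set.mem_univ (t * hi)) ha hb hab
      simp only [smul_eq_mul] at this
      have harg : (hi - X x) / d * (t * lo) + (X x - lo) / d * (t * hi) = t * X x := by
        field_simp; ring
      rwa [harg] at this
    have step2 : ∑ x, w x * ((hi - X x) / d * A + (X x - lo) / d * B)
        = (hi - m) / d * A + (m - lo) / d * B := by
      have expand : ∀ x, w x * ((hi - X x) / d * A + (X x - lo) / d * B)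
          = (A * hi / d - B * lo / d) * w x + ((B - A) / d) * (w x * X x) := by
        intro x; field_simp; ring
      simp only [expand]
      rw [Finset.sum_add_distrib, ← Finset.mul_sum, ← Finset.mul_sum, hw1, ← hm]
      field_simp; ring
    have hq0 : 0 ≤ (m - lo) / d := by
      apply div_nonneg _ hd0.le
      have : ∑ x, w x * lo ≤ m := by
        apply Finset.sum_le_sum
        intro x _
        exact mul_le_mul_of_nonneg_left (hX x).1 (hw0 x)
      rw [← Finset.sum_mul, hw1, one_mul] at this
      linarith
    have hq1 : (m - lo) / d ≤ 1 := by
      rw [div_le_one hd0]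
      have : m ≤ ∑ x, w x * hi := by
        apply Finset.sum_le_sum
        intro x _
        exact mul_le_mul_of_nonneg_left (hX x).2 (hw0 x)
      rw [← Finset.sum_mul, hw1, one_mul] at this
      linarith
    set qq := (m - lo) / d with hqq
    set s := t * d with hs
    have hBA : B = A * Real.exp s := by
      rw [hA, hB, ← Real.exp_add, hs, hd]; ring_nf
    have step3 : (hi - m) / d * A + (m - lo) / d * B = A * (1 - qq + qq * Real.exp s) := by
      rw [hBA, hqq]
      field_simp
      ring
    have hDpos : 0 < 1 - qq + qq * Real.exp s := by
      rcases eq_or_lt_of_le hq0 with h | h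
      · simp [← h]
      · nlinarith [Real.exp_pos s]
    have step4 : 1 - qq + qq * Real.exp s ≤ Real.exp (qq * s + s ^ 2 / 8) := by
      calc 1 - qq + qq * Real.exp s = Real.exp (Real.log (1 - qq + qq * Real.exp s)) :=
            (Real.exp_log hDpos).symm
        _ ≤ _ := Real.exp_le_exp.2 (aux_log_ineq qq s hq0 hq1)
    calc ∑ x, w x * Real.exp (t * X x)
        ≤ ∑ x, w x * ((hi - X x) / d * A + (X x - lo) / d * B) := by
          apply Finset.sum_le_sum
          intro x _
          exact mul_le_mul_of_nonneg_left (step1 x) (hw0 x)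
      _ = (hi - m) / d * A + (m - lo) / d * B := step2
      _ = A * (1 - qq + qq * Real.exp s) := step3
      _ ≤ A * Real.exp (qq * s + s ^ 2 / 8) := by
          apply mul_le_mul_of_nonneg_left step4 (Real.exp_nonneg _)
      _ = Real.exp (t * lo + (qq * s + s ^ 2 / 8)) := by rw [hA, ← Real.exp_add]
      _ = Real.exp (t * m + t ^ 2 * (hi - lo) ^ 2 / 8) := by
          congr 1
          rw [hqq, hs, hd]
          field_simp
          ring

lemma aux_bernstein_mgf {α : Type*} [Fintype α] (w X : α → ℝ)
    (hw0 : ∀ x, 0 ≤ w x) (hw1 : ∑ x, w x = 1) (c t : ℝ)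
    (hc : ∀ x, |X x| ≤ c) (ht : 0 ≤ t) (htc : t * c < 3) :
    ∑ x, w x * Real.exp (t * X x)
      ≤ Real.exp (t * (∑ x, w x * X x)
          + t ^ 2 * (∑ x, w x * X x ^ 2) / (2 * (1 - t * c / 3))) := by
  set K := 2 * (1 - t * c / 3) with hK
  have hKpos : 0 < K := by
    rw [hK]; linarith
  have hpt : ∀ x, Real.exp (t * X x) ≤ 1 + t * X x + (t * X x) ^ 2 / K := by
    intro x
    have habs : |t * X x| ≤ t * c := by
      rw [abs_mul, abs_of_nonneg ht]
      exact mul_le_mul_of_nonneg_left (hc x) ht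
    have := aux_exp_taylor (t * X x) (t * c) habs htc
    rw [← hK] at this
    linarith
  have hsum : ∑ x, w x * (1 + t * X x + (t * X x) ^ 2 / K)
      = 1 + (t * (∑ x, w x * X x) + t ^ 2 * (∑ x, w x * X x ^ 2) / K) := by
    have expand : ∀ x, w x * (1 + t * X x + (t * X x) ^ 2 / K)
        = w x + t * (w x * X x) + (t ^ 2 / K) * (w x * X x ^ 2) := by
      intro x; ring
    simp only [expand]
    rw [Finset.sum_add_distrib, Finset.sum_add_distrib, ← Finset.mul_sum, ← Finset.mul_sum, hw1]
    ring
  calc ∑ x, w x * Real.exp (t * X x)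
      ≤ ∑ x, w x * (1 + t * X x + (t * X x) ^ 2 / K) := by
        apply Finset.sum_le_sum
        intro x _
        exact mul_le_mul_of_nonneg_left (hpt x) (hw0 x)
    _ = 1 + (t * (∑ x, w x * X x) + t ^ 2 * (∑ x, w x * X x ^ 2) / K) := hsum
    _ ≤ Real.exp (t * (∑ x, w x * X x) + t ^ 2 * (∑ x, w x * X x ^ 2) / K) := by
        have := Real.add_one_le_exp (t * (∑ x, w x * X x) + t ^ 2 * (∑ x, w x * X x ^ 2) / K)
        linarith

lemma aux_chernoff {Mn : ℕ} {α : Type*} [Fintype α] [DecidableEq α]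
    (w X : Fin Mn → α → ℝ) (hw0 : ∀ i x, 0 ≤ w i x) (t τ : ℝ) (ht : 0 ≤ t) :
    ∑ h ∈ Finset.univ.filter (fun h : Fin Mn → α => τ ≤ ∑ i, X i (h i)), ∏ i, w i (h i)
      ≤ Real.exp (-(t * τ)) * ∏ i, ∑ x, w i x * Real.exp (t * X i x) := by
  have key : ∀ h : Fin Mn → α, h ∈ Finset.univ.filter (fun h : Fin Mn → α => τ ≤ ∑ i, X i (h i)) →
      ∏ i, w i (h i) ≤ Real.exp (-(t * τ)) * ∏ i, (w i (h i) * Real.exp (t * X i (h i))) := by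
    intro h hh
    rw [Finset.mem_filter] at hh
    have hexp : (1 : ℝ) ≤ Real.exp (-(t * τ)) * Real.exp (t * ∑ i, X i (h i)) := by
      rw [← Real.exp_add]
      rw [show -(t * τ) + t * ∑ i, X i (h i) = t * ((∑ i, X i (h i)) - τ) by ring]
      apply Real.one_le_exp
      have h2 := hh.2
      have : (0:ℝ) ≤ (∑ i, X i (h i)) - τ := by linarith
      exact mul_nonneg ht this
    calc ∏ i, w i (h i) = 1 * ∏ i, w i (h i) := (one_mul _).symm
      _ ≤ (Real.exp (-(t * τ)) * Real.exp (t * ∑ i, X i (h i))) * ∏ i, w i (h i) := by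
          apply mul_le_mul_of_nonneg_right hexp
          exact Finset.prod_nonneg fun i _ => hw0 i (h i)
      _ = Real.exp (-(t * τ)) * ∏ i, (w i (h i) * Real.exp (t * X i (h i))) := by
          rw [Finset.mul_sum, Real.exp_sum, mul_assoc, ← Finset.prod_mul_distrib]
          congr 1
          exact Finset.prod_congr rfl fun i _ => mul_comm _ _
  calc ∑ h ∈ Finset.univ.filter (fun h : Fin Mn → α => τ ≤ ∑ i, X i (h i)), ∏ i, w i (h i)
      ≤ ∑ h ∈ Finset.univ.filter (fun h : Fin Mn → α => τ ≤ ∑ i, X i (h i)),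
          Real.exp (-(t * τ)) * ∏ i, (w i (h i) * Real.exp (t * X i (h i))) :=
        Finset.sum_le_sum key
    _ ≤ ∑ h : Fin Mn → α, Real.exp (-(t * τ)) * ∏ i, (w i (h i) * Real.exp (t * X i (h i))) := by
        apply Finset.sum_le_sum_of_subset_of_nonneg (Finset.filter_subset _ _)
        intro h _ _
        exact mul_nonneg (Real.exp_nonneg _)
          (Finset.prod_nonneg fun i _ => mul_nonneg (hw0 i (h i)) (Real.exp_nonneg _))
    _ = Real.exp (-(t * τ)) * ∏ i, ∑ x, w i x * Real.exp (t * X i x) := by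
        rw [← Finset.mul_sum]
        congr 1
        rw [Finset.prod_univ_sum]
        rw [Fintype.piFinset_univ]

lemma aux_bdd {γ : Type*} [Finite γ] (s : Set ℝ) (F : γ → ℝ)
    (h : ∀ x ∈ s, ∃ g, x = F g) : BddAbove s := by
  apply Set.Finite.bddAbove
  apply (Set.finite_range F).subset
  intro x hx
  obtain ⟨g, hg⟩ := h x hx
  exact ⟨g, hg.symm⟩

lemma aux_ttil_of_nbar_eq_zero {M N L : ℕ} (hN : 0 < N) (hL : 2 ≤ L)
    (f : Fin M → Fin L → Fin (L + 1) → ℝ) (a : Fin L → ℝ) (q : Fin M → Fin N → ℝ)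
    (p : Fin M → Fin L → Fin L → ℝ) (h0 : CrowdDS.nbar f = 0) :
    CrowdDS.ttil f a q p = 0 := by
  have hk01 : (⟨0, by omega⟩ : Fin L) ≠ (⟨1, by omega⟩ : Fin L) := by
    simp [Fin.ext_iff]
  have htm : ∀ j, CrowdDS.tauMax f a q p j = 0 := by
    intro j
    unfold CrowdDS.tauMax
    have hset : {x : ℝ | ∃ k l : Fin L, k ≠ l ∧
        x = CrowdDS.gap f a q p j k l / CrowdDS.nbar f} = {0} := by
      ext x
      simp only [Set.mem_setOf_eq, Set.mem_singleton_iff]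
      constructor
      · rintro ⟨k, l, _, rfl⟩
        rw [h0, div_zero]
      · rintro rfl
        exact ⟨_, _, hk01, by rw [h0, div_zero]⟩
    rw [hset, csSup_singleton]
  unfold CrowdDS.ttil
  have hset : {x : ℝ | ∃ j : Fin N, x = CrowdDS.tauMax f a q p j} = {0} := by
    ext x
    simp only [Set.mem_setOf_eq, Set.mem_singleton_iff]
    constructor
    · rintro ⟨j, rfl⟩
      exact htm j
    · rintro rfl
      exact ⟨⟨0, hN⟩, (htm _).symm⟩
  rw [hset, csSup_singleton]

lemma aux_tail_bound {Mn Ln : ℕ} (w D : Fin Mn → Fin (Ln + 1) → ℝ)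
    (hw0 : ∀ i x, 0 ≤ w i x) (hw1 : ∀ i, ∑ x, w i x = 1)
    (B : Fin Mn → ℝ) (hB : ∀ i x, |D i x| ≤ B i)
    (C V τ0 τ : ℝ)
    (hC : ∀ i x, |D i x| ≤ C) (hC0 : 0 < C)
    (hV : (∑ i, ∑ x, w i x * D i x ^ 2) ≤ V) (hV0 : 0 ≤ V)
    (hS0 : 0 < ∑ i, B i ^ 2)
    (hτ : 0 < τ)
    (hgap : (∑ i, ∑ x, w i x * D i x) - τ0 ≤ -τ) :
    (∑ h ∈ Finset.univ.filter (fun h : Fin Mn → Fin (Ln + 1) => τ0 ≤ ∑ i, D i (h i)),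
        ∏ i, w i (h i))
      ≤ min (Real.exp (-τ ^ 2 / (2 * ∑ i, B i ^ 2)))
            (Real.exp (-τ ^ 2 / (2 * (V + C * τ / 3)))) := by
  set S := ∑ i, B i ^ 2 with hSdef
  set m : Fin Mn → ℝ := fun i => ∑ x, w i x * D i x with hmdef
  have hm_sum : (∑ i, m i) - τ0 ≤ -τ := hgap
  refine le_min ?_ ?_
  · -- Hoeffding bound
    set t := τ / S with htdef
    have ht0 : 0 ≤ t := le_of_lt (div_pos hτ hS0)
    calc (∑ h ∈ Finset.univ.filter (fun h : Fin Mn → Fin (Ln + 1) => τ0 ≤ ∑ i, D i (h i)),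
          ∏ i, w i (h i))
        ≤ Real.exp (-(t * τ0)) * ∏ i, ∑ x, w i x * Real.exp (t * D i x) :=
          aux_chernoff w D hw0 t τ0 ht0
      _ ≤ Real.exp (-(t * τ0)) * ∏ i, Real.exp (t * m i + t ^ 2 * (B i - -B i) ^ 2 / 8) := by
          apply mul_le_mul_of_nonneg_left _ (Real.exp_nonneg _)
          apply Finset.prod_le_prod
          · intro i _
            exact Finset.sum_nonneg fun x _ => mul_nonneg (hw0 i x) (Real.exp_nonneg _)
          · intro i _
            exact aux_hoeffding_mgf (w i) (D i) (hw0 i) (hw1 i) (-B i) (B i) t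
              (fun x => abs_le.1 (hB i x))
      _ = Real.exp (-(t * τ0) + (t * (∑ i, m i) + t ^ 2 * S / 2)) := by
          rw [← Real.exp_sum, ← Real.exp_add]
          congr 1
          have e : ∀ i : Fin Mn, t * m i + t ^ 2 * (B i - -B i) ^ 2 / 8
              = t * m i + (t ^ 2 / 2) * B i ^ 2 := by intro i; ring
          simp only [e]
          rw [Finset.sum_add_distrib, ← Finset.mul_sum, ← Finset.mul_sum]
          ring
      _ ≤ Real.exp (-(t * τ) + t ^ 2 * S / 2) := by
          apply Real.exp_le_exp.2
          nlinarith [mul_le_mul_of_nonneg_left hm_sum ht0]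
      _ = Real.exp (-τ ^ 2 / (2 * S)) := by
          congr 1
          rw [htdef]
          field_simp
          ring
  · -- Bernstein bound
    set W := V + C * τ / 3 with hWdef
    have hCτ : 0 < C * τ / 3 := by positivity
    have hWpos : 0 < W := by rw [hWdef]; linarith
    rcases eq_or_lt_of_le hV0 with hVeq | hVpos
    · -- V = 0 : degenerate case
      have hzero : ∀ i x, w i x * D i x ^ 2 = 0 := by
        intro i x
        have h1 : (∑ i, ∑ x, w i x * D i x ^ 2) = 0 := by
          apply le_antisymm (hVeq ▸ hV)
          exact Finset.sum_nonneg fun i _ =>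
            Finset.sum_nonneg fun x _ => mul_nonneg (hw0 i x) (sq_nonneg _)
        have h2 := (Finset.sum_eq_zero_iff_of_nonneg (fun i _ =>
          Finset.sum_nonneg fun x _ => mul_nonneg (hw0 i x) (sq_nonneg _))).1 h1 i
          (Finset.mem_univ i)
        exact (Finset.sum_eq_zero_iff_of_nonneg (fun x _ =>
          mul_nonneg (hw0 i x) (sq_nonneg _))).1 h2 x (Finset.mem_univ x)
      set t3 := 3 / C with ht3def
      have ht30 : 0 ≤ t3 := by positivity
      have hMi : ∀ i, (∑ x, w i x * Real.exp (t3 * D i x)) = 1 := by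
        intro i
        rw [← hw1 i]
        apply Finset.sum_congr rfl
        intro x _
        rcases mul_eq_zero.1 (hzero i x) with h | h
        · simp [h]
        · rw [pow_eq_zero_iff (by norm_num : 2 ≠ 0)] at h
          simp [h]
      have hmi : ∀ i, m i = 0 := by
        intro i
        apply Finset.sum_eq_zero
        intro x _
        rcases mul_eq_zero.1 (hzero i x) with h | h
        · simp [h]
        · rw [pow_eq_zero_iff (by norm_num : 2 ≠ 0)] at h
          simp [h]
      have hτ0 : τ ≤ τ0 := by
        have hz : (∑ i, m i) = 0 := Finset.sum_eq_zero fun i _ => hmi i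
        rw [hz] at hm_sum
        linarith
      calc (∑ h ∈ Finset.univ.filter (fun h : Fin Mn → Fin (Ln + 1) => τ0 ≤ ∑ i, D i (h i)),
            ∏ i, w i (h i))
          ≤ Real.exp (-(t3 * τ0)) * ∏ i, ∑ x, w i x * Real.exp (t3 * D i x) :=
            aux_chernoff w D hw0 t3 τ0 ht30
        _ = Real.exp (-(t3 * τ0)) := by
            rw [Finset.prod_congr rfl (fun i _ => hMi i), Finset.prod_const_one, mul_one]
        _ ≤ Real.exp (-τ ^ 2 / (2 * W)) := by
            apply Real.exp_le_exp.2
            have e1 : W = C * τ / 3 := by rw [hWdef, ← hVeq]; ring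
            have e2 : -τ ^ 2 / (2 * W) = -(3 * τ) / (2 * C) := by
              rw [e1]; field_simp
            have e3 : -(t3 * τ0) ≤ -(t3 * τ) :=
              neg_le_neg (mul_le_mul_of_nonneg_left hτ0 ht30)
            have e4 : -(t3 * τ) = -(3 * τ) / C := by rw [ht3def]; ring
            have e5 : (3 * τ) / (2 * C) ≤ (3 * τ) / C := by
              apply div_le_div_of_nonneg_left (by positivity) hC0 (by linarith)
            rw [e2]
            rw [e4] at e3
            calc -(t3 * τ0) ≤ -(3 * τ) / C := e3
              _ = -((3 * τ) / C) := by ring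
              _ ≤ -((3 * τ) / (2 * C)) := neg_le_neg e5
              _ = -(3 * τ) / (2 * C) := by ring
    · -- V > 0 : genuine Bernstein
      set t := τ / W with htdef
      have ht0 : 0 ≤ t := le_of_lt (div_pos hτ hWpos)
      have htC : t * C < 3 := by
        rw [htdef, div_mul_eq_mul_div, div_lt_iff₀ hWpos]
        rw [hWdef]
        nlinarith
      have hK : 1 - t * C / 3 = V / W := by
        rw [htdef, hWdef]
        field_simp
        ring
      have hKpos : 0 < 1 - t * C / 3 := by
        rw [hK]; positivity
      calc (∑ h ∈ Finset.univ.filter (fun h : Fin Mn → Fin (Ln + 1) => τ0 ≤ ∑ i, D i (h i)),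
            ∏ i, w i (h i))
          ≤ Real.exp (-(t * τ0)) * ∏ i, ∑ x, w i x * Real.exp (t * D i x) :=
            aux_chernoff w D hw0 t τ0 ht0
        _ ≤ Real.exp (-(t * τ0)) * ∏ i, Real.exp (t * m i
              + t ^ 2 * (∑ x, w i x * D i x ^ 2) / (2 * (1 - t * C / 3))) := by
            apply mul_le_mul_of_nonneg_left _ (Real.exp_nonneg _)
            apply Finset.prod_le_prod
            · intro i _
              exact Finset.sum_nonneg fun x _ => mul_nonneg (hw0 i x) (Real.exp_nonneg _)
            · intro i _
              exact aux_bernstein_mgf (w i) (D i) (hw0 i) (hw1 i) C t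
                (fun x => hC i x) ht0 htC
        _ = Real.exp (-(t * τ0) + (t * (∑ i, m i)
              + t ^ 2 * (∑ i, ∑ x, w i x * D i x ^ 2) / (2 * (1 - t * C / 3)))) := by
            rw [← Real.exp_sum, ← Real.exp_add]
            congr 1
            rw [Finset.sum_add_distrib, ← Finset.mul_sum]
            congr 1
            rw [← Finset.sum_div, ← Finset.mul_sum]
        _ ≤ Real.exp (-(t * τ) + t ^ 2 * V / (2 * (1 - t * C / 3))) := by
            apply Real.exp_le_exp.2
            have h1 : -(t * τ0) + t * (∑ i, m i) ≤ -(t * τ) := by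
              nlinarith [mul_le_mul_of_nonneg_left hm_sum ht0]
            have h2 : t ^ 2 * (∑ i, ∑ x, w i x * D i x ^ 2) / (2 * (1 - t * C / 3))
                ≤ t ^ 2 * V / (2 * (1 - t * C / 3)) := by
              rw [div_le_div_iff_of_pos_right (by linarith)]
              exact mul_le_mul_of_nonneg_left hV (sq_nonneg t)
            linarith
        _ = Real.exp (-τ ^ 2 / (2 * W)) := by
            congr 1
            rw [hK, htdef]
            field_simp
            ring

/-- Under the general Dawid–Skene model with a decomposable aggregation
rule: if `t̃ ≤ 0`, then the mean error rate satisfies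
`E[E_N] ≥ 1 − min{exp(−t̃²/2), exp(−t̃²/(2(σ² − c·t̃/3)))}`. -/
theorem mean_error_rate_lower_bound
    {Ω : Type*} [MeasurableSpace Ω] (μ : Measure Ω) [IsProbabilityMeasure μ]
    {M N L : ℕ} (hM : 0 < M) (hN : 0 < N) (hL : 2 ≤ L)
    (y : Fin N → Ω → Fin L) (Z : Fin M → Fin N → Ω → Fin (L + 1))
    (hym : ∀ j, Measurable (y j)) (hZm : ∀ i j, Measurable (Z i j))
    (pri : Fin L → ℝ) (q : Fin M → Fin N → ℝ) (p : Fin M → Fin L → Fin L → ℝ)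
    (hpri : ∀ k, 0 ≤ pri k) (hq0 : ∀ i j, 0 ≤ q i j) (hq1 : ∀ i j, q i j ≤ 1)
    (hp0 : ∀ i k h, 0 ≤ p i k h) (hp1 : ∀ i k, ∑ h, p i k h = 1)
    (hprior : ∀ (j : Fin N) (k : Fin L), (μ {ω | y j ω = k}).toReal = pri k)
    (hlaw : ∀ (j : Fin N) (k : Fin L) (h : Fin M → Fin (L + 1)),
      (μ {ω | y j ω = k ∧ ∀ i, Z i j ω = h i}).toReal
        = pri k * ∏ i, CrowdDS.condLaw q p i j k (h i))
    (hindep : iIndepFun (fun j ω => (y j ω, fun i => Z i j ω)) μ)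
    (f : Fin M → Fin L → Fin (L + 1) → ℝ) (hf0 : ∀ i k k', f i k 0 = f i k' 0)
    (a : Fin L → ℝ)
    (yhat : Fin N → Ω → Fin L) (hyhatm : ∀ j, Measurable (yhat j))
    (hyhat : ∀ (j : Fin N) (ω : Ω) (k : Fin L),
      (∑ i, f i k (Z i j ω)) + a k ≤ (∑ i, f i (yhat j ω) (Z i j ω)) + a (yhat j ω))
    (ht : CrowdDS.ttil f a q p ≤ 0) :
    1 - min
        (Real.exp (-(CrowdDS.ttil f a q p) ^ 2 / 2))
        (Real.exp (-(CrowdDS.ttil f a q p) ^ 2 /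
          (2 * (CrowdDS.sigmaSq f q p - CrowdDS.cConst f * CrowdDS.ttil f a q p / 3))))
      ≤ (N : ℝ)⁻¹ * ∑ j, (μ {ω | yhat j ω ≠ y j ω}).toReal := by
  classical
  -- trivial nonnegativity of the RHS
  have hRHS0 : (0:ℝ) ≤ (N : ℝ)⁻¹ * ∑ j, (μ {ω | yhat j ω ≠ y j ω}).toReal :=
    mul_nonneg (inv_nonneg.2 (Nat.cast_nonneg N))
      (Finset.sum_nonneg fun j _ => ENNReal.toReal_nonneg)
  rcases eq_or_lt_of_le ht with hT0 | hTneg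
  · -- ttil = 0 : the bound is trivial
    rw [hT0]
    norm_num
    exact hRHS0
  · -- main case : ttil < 0
    set T := CrowdDS.ttil f a q p with hTdef
    have hNb0 : CrowdDS.nbar f ≠ 0 := by
      intro h0
      have := aux_ttil_of_nbar_eq_zero hN hL f a q p h0
      rw [← hTdef] at this
      linarith
    have hNbpos : 0 < CrowdDS.nbar f :=
      lt_of_le_of_ne (Real.sqrt_nonneg _) (Ne.symm hNb0)
    set Nb := CrowdDS.nbar f with hNbdef
    -- fixed distinct labels
    have hL0 : 0 < L := by omega
    have hL1 : 1 < L := by omega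
    set k0 : Fin L := ⟨0, hL0⟩ with hk0def
    set k1 : Fin L := ⟨1, hL1⟩ with hk1def
    have hk01 : k0 ≠ k1 := by
      simp [hk0def, hk1def, Fin.ext_iff]
    set h0L : Fin L := ⟨0, hL0⟩ with hh0Ldef
    -- the per-worker bounds B i, the global bound C, variance proxy V0
    set B : Fin M → ℝ := fun i => sSup {x : ℝ | ∃ k l h : Fin L, k ≠ l ∧
      x = |f i k h.succ - f i l h.succ|} with hBdef
    set C : ℝ := sSup {x : ℝ | ∃ (i : Fin M) (k l h : Fin L), k ≠ l ∧
      x = |f i k h.succ - f i l h.succ|} with hCdef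
    set V0 : ℝ := sSup {x : ℝ | ∃ (j : Fin N) (k l : Fin L), k ≠ l ∧
      x = ∑ i, ∑ h : Fin L, q i j * (f i k h.succ - f i l h.succ) ^ 2 * p i k h} with hV0def
    have hbddB : ∀ i : Fin M, BddAbove {x : ℝ | ∃ k l h : Fin L, k ≠ l ∧
        x = |f i k h.succ - f i l h.succ|} := by
      intro i
      apply aux_bdd _ (fun g : Fin L × Fin L × Fin L => |f i g.1 g.2.2.succ - f i g.2.1 g.2.2.succ|)
      rintro x ⟨k, l, hh, _, rfl⟩
      exact ⟨(k, l, hh), rfl⟩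
    have hbddC : BddAbove {x : ℝ | ∃ (i : Fin M) (k l h : Fin L), k ≠ l ∧
        x = |f i k h.succ - f i l h.succ|} := by
      apply aux_bdd _ (fun g : Fin M × Fin L × Fin L × Fin L =>
        |f g.1 g.2.1 g.2.2.2.succ - f g.1 g.2.2.1 g.2.2.2.succ|)
      rintro x ⟨i, k, l, hh, _, rfl⟩
      exact ⟨(i, k, l, hh), rfl⟩
    have hbddV : BddAbove {x : ℝ | ∃ (j : Fin N) (k l : Fin L), k ≠ l ∧
        x = ∑ i, ∑ h : Fin L, q i j * (f i k h.succ - f i l h.succ) ^ 2 * p i k h} := by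
      apply aux_bdd _ (fun g : Fin N × Fin L × Fin L =>
        ∑ i, ∑ h : Fin L, q i g.1 * (f i g.2.1 h.succ - f i g.2.2 h.succ) ^ 2 * p i g.2.1 h)
      rintro x ⟨j, k, l, _, rfl⟩
      exact ⟨(j, k, l), rfl⟩
    have hbddTau : ∀ j : Fin N, BddAbove {x : ℝ | ∃ k l : Fin L, k ≠ l ∧
        x = CrowdDS.gap f a q p j k l / CrowdDS.nbar f} := by
      intro j
      apply aux_bdd _ (fun g : Fin L × Fin L => CrowdDS.gap f a q p j g.1 g.2 / CrowdDS.nbar f)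
      rintro x ⟨k, l, _, rfl⟩
      exact ⟨(k, l), rfl⟩
    have hbddT : BddAbove {x : ℝ | ∃ j : Fin N, x = CrowdDS.tauMax f a q p j} := by
      apply aux_bdd _ (fun j : Fin N => CrowdDS.tauMax f a q p j)
      rintro x ⟨j, rfl⟩
      exact ⟨j, rfl⟩
    have hB0 : ∀ i, 0 ≤ B i := by
      intro i
      have hmem : |f i k0 h0L.succ - f i k1 h0L.succ| ∈ {x : ℝ | ∃ k l h : Fin L, k ≠ l ∧
          x = |f i k h.succ - f i l h.succ|} := ⟨k0, k1, h0L, hk01, rfl⟩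
      exact le_trans (abs_nonneg _) (le_csSup (hbddB i) hmem)
    have hBC : ∀ i, B i ≤ C := by
      intro i
      have hne1 : |f i k0 h0L.succ - f i k1 h0L.succ| ∈ {x : ℝ | ∃ k l h : Fin L, k ≠ l ∧
          x = |f i k h.succ - f i l h.succ|} := ⟨k0, k1, h0L, hk01, rfl⟩
      apply csSup_le ⟨_, hne1⟩
      rintro x ⟨k, l, hh, hne, rfl⟩
      have hmem : |f i k hh.succ - f i l hh.succ| ∈ {x : ℝ | ∃ (i : Fin M) (k l h : Fin L),
          k ≠ l ∧ x = |f i k h.succ - f i l h.succ|} := ⟨i, k, l, hh, hne, rfl⟩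
      exact le_csSup hbddC hmem
    have hNb2 : Nb ^ 2 = ∑ i, B i ^ 2 := by
      rw [hNbdef]
      exact Real.sq_sqrt (Finset.sum_nonneg fun i _ => sq_nonneg _)
    have hS0 : 0 < ∑ i, B i ^ 2 := by
      rw [← hNb2]; positivity
    have hCpos : 0 < C := by
      by_contra hc
      push_neg at hc
      have hBz : ∀ i, B i = 0 := fun i => le_antisymm (le_trans (hBC i) hc) (hB0 i)
      have : (∑ i, B i ^ 2) = 0 := Finset.sum_eq_zero fun i _ => by rw [hBz i]; ring
      linarith
    have hV0nn : 0 ≤ V0 := by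
      have hmem : (∑ i, ∑ h : Fin L, q i ⟨0, hN⟩ * (f i k0 h.succ - f i k1 h.succ) ^ 2 * p i k0 h)
          ∈ {x : ℝ | ∃ (j : Fin N) (k l : Fin L), k ≠ l ∧
            x = ∑ i, ∑ h : Fin L, q i j * (f i k h.succ - f i l h.succ) ^ 2 * p i k h} :=
        ⟨⟨0, hN⟩, k0, k1, hk01, rfl⟩
      refine le_trans ?_ (le_csSup hbddV hmem)
      apply Finset.sum_nonneg
      intro i _
      apply Finset.sum_nonneg
      intro h _
      have := hq0 i ⟨0, hN⟩
      have := hp0 i k0 h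
      positivity
    -- τ and the target quantities
    set τ : ℝ := -T * Nb with hτdef
    have hτpos : 0 < τ := by
      rw [hτdef]
      exact mul_pos (by linarith) hNbpos
    have hsig : CrowdDS.sigmaSq f q p = 1 / Nb ^ 2 * V0 := rfl
    have hcc : CrowdDS.cConst f = 1 / Nb * C := rfl
    have hWpos : 0 < V0 + C * τ / 3 := by
      have : 0 < C * τ / 3 := by positivity
      linarith
    -- the two exponent identities
    have hAeq : -T ^ 2 / 2 = -τ ^ 2 / (2 * ∑ i, B i ^ 2) := by
      rw [← hNb2, hτdef]
      field_simp
    have hBeq : -T ^ 2 / (2 * (CrowdDS.sigmaSq f q p - CrowdDS.cConst f * T / 3))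
        = -τ ^ 2 / (2 * (V0 + C * τ / 3)) := by
      rw [hsig, hcc, hτdef]
      rw [div_eq_div_iff ?pos1 ?pos2]
      case pos1 =>
        have he : 1 / Nb ^ 2 * V0 - 1 / Nb * C * T / 3 = (V0 + C * (-T * Nb) / 3) / Nb ^ 2 := by
          field_simp
          ring
        rw [he]
        rw [hτdef] at hWpos
        positivity
      case pos2 =>
        rw [hτdef] at hWpos
        positivity
      field_simp
      ring
    -- total prior mass is one
    have hpritot : (∑ k, pri k) = 1 := by
      have h1 : ∀ k : Fin L, pri k = (μ (y ⟨0, hN⟩ ⁻¹' {k})).toReal := by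
        intro k
        rw [← hprior ⟨0, hN⟩ k]
        rfl
      simp only [h1]
      rw [← ENNReal.toReal_sum (fun k _ => measure_ne_top μ _)]
      rw [MeasureTheory.sum_measure_preimage_singleton Finset.univ
        (fun k _ => hym ⟨0, hN⟩ (measurableSet_singleton k))]
      rw [Finset.coe_univ, Set.preimage_univ, measure_univ, ENNReal.toReal_one]
    -- the alternative label function
    set lf : Fin L → Fin L := fun k => if k = k0 then k1 else k0 with hlfdef
    have hlfk : ∀ k, lf k ≠ k := by
      intro k
      simp only [hlfdef]
      by_cases hk : k = k0
      · rw [if_pos hk, hk]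
        exact fun h => hk01 h.symm
      · rw [if_neg hk]
        exact fun h => hk h.symm
    set minAB : ℝ := min (Real.exp (-τ ^ 2 / (2 * ∑ i, B i ^ 2)))
      (Real.exp (-τ ^ 2 / (2 * (V0 + C * τ / 3)))) with hminABdef
    -- KEY per-item bound
    have key2 : ∀ j : Fin N, (μ {ω | yhat j ω = y j ω}).toReal ≤ minAB := by
      intro j
      -- the per-label tail bound
      have hk_bound : ∀ k : Fin L,
          (∑ h ∈ Finset.univ.filter (fun h : Fin M → Fin (L + 1) =>
              a (lf k) - a k ≤ ∑ i, (f i k (h i) - f i (lf k) (h i))),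
            ∏ i, CrowdDS.condLaw q p i j k (h i)) ≤ minAB := by
        intro k
        have hklf : k ≠ lf k := Ne.symm (hlfk k)
        -- conditional weights
        have hw0 : ∀ (i : Fin M) (x : Fin (L + 1)), 0 ≤ CrowdDS.condLaw q p i j k x := by
          intro i x
          by_cases hx : x = 0
          · simp only [CrowdDS.condLaw, dif_pos hx]
            linarith [hq1 i j]
          · simp only [CrowdDS.condLaw, dif_neg hx]
            exact mul_nonneg (hq0 i j) (hp0 i k _)
        have hw1 : ∀ i : Fin M, (∑ x : Fin (L + 1), CrowdDS.condLaw q p i j k x) = 1 := by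
          intro i
          rw [Fin.sum_univ_succ]
          have h0 : CrowdDS.condLaw q p i j k 0 = 1 - q i j := by
            simp [CrowdDS.condLaw]
          have hs : ∀ x : Fin L, CrowdDS.condLaw q p i j k x.succ = q i j * p i k x := by
            intro x
            simp only [CrowdDS.condLaw, dif_neg (Fin.succ_ne_zero x), Fin.pred_succ]
          rw [h0]
          rw [Finset.sum_congr rfl (fun x _ => hs x), ← Finset.mul_sum, hp1 i k]
          ring
        have hBb : ∀ (i : Fin M) (x : Fin (L + 1)), |f i k x - f i (lf k) x| ≤ B i := by
          intro i x
          by_cases hx : x = 0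
          · rw [hx, hf0 i k (lf k), sub_self, abs_zero]
            exact hB0 i
          · rw [← Fin.succ_pred x hx]
            have hmem : |f i k (x.pred hx).succ - f i (lf k) (x.pred hx).succ|
                ∈ {x : ℝ | ∃ k' l h : Fin L, k' ≠ l ∧ x = |f i k' h.succ - f i l h.succ|} :=
              ⟨k, lf k, x.pred hx, hklf, rfl⟩
            exact le_csSup (hbddB i) hmem
        have hCb : ∀ (i : Fin M) (x : Fin (L + 1)), |f i k x - f i (lf k) x| ≤ C := by
          intro i x
          by_cases hx : x = 0
          · rw [hx, hf0 i k (lf k), sub_self, abs_zero]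
            exact hCpos.le
          · rw [← Fin.succ_pred x hx]
            have hmem : |f i k (x.pred hx).succ - f i (lf k) (x.pred hx).succ|
                ∈ {x : ℝ | ∃ (i' : Fin M) (k' l h : Fin L), k' ≠ l ∧
                  x = |f i' k' h.succ - f i' l h.succ|} := ⟨i, k, lf k, x.pred hx, hklf, rfl⟩
            exact le_csSup hbddC hmem
        -- rewriting the conditional sums over `Fin (L+1)` as sums over `Fin L`
        have hconv2 : ∀ i : Fin M,
            (∑ x : Fin (L + 1), CrowdDS.condLaw q p i j k x * (f i k x - f i (lf k) x) ^ 2)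
              = ∑ h : Fin L, q i j * (f i k h.succ - f i (lf k) h.succ) ^ 2 * p i k h := by
          intro i
          rw [Fin.sum_univ_succ]
          have h0 : CrowdDS.condLaw q p i j k 0 * (f i k 0 - f i (lf k) 0) ^ 2 = 0 := by
            rw [hf0 i k (lf k), sub_self]
            ring
          rw [h0, zero_add]
          apply Finset.sum_congr rfl
          intro x _
          simp only [CrowdDS.condLaw, dif_neg (Fin.succ_ne_zero x), Fin.pred_succ]
          ring
        have hconv1 : ∀ i : Fin M,
            (∑ x : Fin (L + 1), CrowdDS.condLaw q p i j k x * (f i k x - f i (lf k) x))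
              = ∑ h : Fin L, q i j * (f i k h.succ - f i (lf k) h.succ) * p i k h := by
          intro i
          rw [Fin.sum_univ_succ]
          have h0 : CrowdDS.condLaw q p i j k 0 * (f i k 0 - f i (lf k) 0) = 0 := by
            rw [hf0 i k (lf k), sub_self]
            ring
          rw [h0, zero_add]
          apply Finset.sum_congr rfl
          intro x _
          simp only [CrowdDS.condLaw, dif_neg (Fin.succ_ne_zero x), Fin.pred_succ]
          ring
        have hVb : (∑ i, ∑ x : Fin (L + 1),
            CrowdDS.condLaw q p i j k x * (f i k x - f i (lf k) x) ^ 2) ≤ V0 := by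
          rw [Finset.sum_congr rfl (fun i _ => hconv2 i)]
          have hmem : (∑ i, ∑ h : Fin L, q i j * (f i k h.succ - f i (lf k) h.succ) ^ 2 * p i k h)
              ∈ {x : ℝ | ∃ (j' : Fin N) (k' l : Fin L), k' ≠ l ∧
                x = ∑ i, ∑ h : Fin L, q i j' * (f i k' h.succ - f i l h.succ) ^ 2 * p i k' h} :=
            ⟨j, k, lf k, hklf, rfl⟩
          exact le_csSup hbddV hmem
        have hgap_le : CrowdDS.gap f a q p j k (lf k) ≤ -τ := by
          have h1 : CrowdDS.gap f a q p j k (lf k) / CrowdDS.nbar f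
              ≤ CrowdDS.tauMax f a q p j := by
            have hmem : CrowdDS.gap f a q p j k (lf k) / CrowdDS.nbar f
                ∈ {x : ℝ | ∃ k' l : Fin L, k' ≠ l ∧
                  x = CrowdDS.gap f a q p j k' l / CrowdDS.nbar f} := ⟨k, lf k, hklf, rfl⟩
            unfold CrowdDS.tauMax
            exact le_csSup (hbddTau j) hmem
          have h2 : CrowdDS.tauMax f a q p j ≤ T := by
            have hmem : CrowdDS.tauMax f a q p j
                ∈ {x : ℝ | ∃ j' : Fin N, x = CrowdDS.tauMax f a q p j'} := ⟨j, rfl⟩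
            rw [hTdef]
            unfold CrowdDS.ttil
            exact le_csSup hbddT hmem
          have h3 := (div_le_iff₀ hNbpos).1 (le_trans h1 h2)
          rw [hτdef]
          linarith
        have hgap2 : (∑ i, ∑ x : Fin (L + 1),
            CrowdDS.condLaw q p i j k x * (f i k x - f i (lf k) x)) - (a (lf k) - a k)
              ≤ -τ := by
          have he : (∑ i, ∑ x : Fin (L + 1),
              CrowdDS.condLaw q p i j k x * (f i k x - f i (lf k) x)) - (a (lf k) - a k)
                = CrowdDS.gap f a q p j k (lf k) := by
            rw [Finset.sum_congr rfl (fun i _ => hconv1 i), CrowdDS.gap]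
            ring
          rw [he]
          exact hgap_le
        have := aux_tail_bound (fun i => CrowdDS.condLaw q p i j k)
          (fun i x => f i k x - f i (lf k) x) hw0 hw1 B hBb C V0 (a (lf k) - a k) τ
          hCb hCpos hVb hV0nn hS0 hτpos hgap2
        exact this
      -- decomposition of the success event
      have hsub : {ω | yhat j ω = y j ω} ⊆ ⋃ k : Fin L, {ω | y j ω = k ∧
          a (lf k) - a k ≤ ∑ i, (f i k (Z i j ω) - f i (lf k) (Z i j ω))} := by
        intro ω hω
        simp only [Set.mem_setOf_eq] at hω
        apply Set.mem_iUnion.2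
        refine ⟨y j ω, rfl, ?_⟩
        have h := hyhat j ω (lf (y j ω))
        rw [hω] at h
        rw [Finset.sum_sub_distrib]
        linarith
      have hstep1 : μ {ω | yhat j ω = y j ω} ≤ ∑ k : Fin L,
          ∑ h ∈ Finset.univ.filter (fun h : Fin M → Fin (L + 1) =>
            a (lf k) - a k ≤ ∑ i, (f i k (h i) - f i (lf k) (h i))),
          μ {ω | y j ω = k ∧ ∀ i, Z i j ω = h i} := by
        refine le_trans (measure_mono hsub) (le_trans (measure_iUnion_fintype_le μ _) ?_)
        apply Finset.sum_le_sum
        intro k _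
        refine le_trans (measure_mono ?_) (MeasureTheory.measure_biUnion_finset_le _ _)
        intro ω hω
        obtain ⟨hy, hG⟩ := hω
        apply Set.mem_iUnion₂.2
        refine ⟨fun i => Z i j ω, Finset.mem_filter.2 ⟨Finset.mem_univ _, hG⟩, hy, fun i => rfl⟩
      have hstep2 : (μ {ω | yhat j ω = y j ω}).toReal ≤ ∑ k : Fin L,
          ∑ h ∈ Finset.univ.filter (fun h : Fin M → Fin (L + 1) =>
            a (lf k) - a k ≤ ∑ i, (f i k (h i) - f i (lf k) (h i))),
          (μ {ω | y j ω = k ∧ ∀ i, Z i j ω = h i}).toReal := by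
        refine le_trans (ENNReal.toReal_mono ?_ hstep1) (le_of_eq ?_)
        · apply ne_of_lt
          rw [ENNReal.sum_lt_top]
          intro k _
          rw [ENNReal.sum_lt_top]
          intro h _
          exact measure_lt_top μ _
        · rw [ENNReal.toReal_sum (fun k _ => ?_)]
          · apply Finset.sum_congr rfl
            intro k _
            rw [ENNReal.toReal_sum (fun h _ => measure_ne_top μ _)]
          · apply ne_of_lt
            rw [ENNReal.sum_lt_top]
            intro h _
            exact measure_lt_top μ _
      calc (μ {ω | yhat j ω = y j ω}).toReal
          ≤ ∑ k : Fin L, ∑ h ∈ Finset.univ.filter (fun h : Fin M → Fin (L + 1) =>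
              a (lf k) - a k ≤ ∑ i, (f i k (h i) - f i (lf k) (h i))),
            (μ {ω | y j ω = k ∧ ∀ i, Z i j ω = h i}).toReal := hstep2
        _ = ∑ k : Fin L, pri k * ∑ h ∈ Finset.univ.filter (fun h : Fin M → Fin (L + 1) =>
              a (lf k) - a k ≤ ∑ i, (f i k (h i) - f i (lf k) (h i))),
            ∏ i, CrowdDS.condLaw q p i j k (h i) := by
            apply Finset.sum_congr rfl
            intro k _
            rw [Finset.mul_sum]
            apply Finset.sum_congr rfl
            intro h _
            exact hlaw j k h
        _ ≤ ∑ k : Fin L, pri k * minAB := by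
            apply Finset.sum_le_sum
            intro k _
            exact mul_le_mul_of_nonneg_left (hk_bound k) (hpri k)
        _ = minAB := by
            rw [← Finset.sum_mul, hpritot, one_mul]
    -- from success probability to error probability
    have key3 : ∀ j : Fin N, 1 - minAB ≤ (μ {ω | yhat j ω ≠ y j ω}).toReal := by
      intro j
      have hSm : MeasurableSet {ω | yhat j ω = y j ω} := by
        have he : {ω | yhat j ω = y j ω} = ⋃ k : Fin L, (yhat j ⁻¹' {k} ∩ y j ⁻¹' {k}) := by
          ext ω
          simp only [Set.mem_setOf_eq, Set.mem_iUnion, Set.mem_inter_iff, Set.mem_preimage,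
            Set.mem_singleton_iff]
          constructor
          · intro h
            exact ⟨y j ω, h, rfl⟩
          · rintro ⟨k, h1, h2⟩
            rw [h1, h2]
        rw [he]
        exact MeasurableSet.iUnion fun k =>
          (hyhatm j (measurableSet_singleton k)).inter (hym j (measurableSet_singleton k))
      have hco : {ω | yhat j ω ≠ y j ω} = {ω | yhat j ω = y j ω}ᶜ := rfl
      rw [hco, measure_compl hSm (measure_ne_top μ _), measure_univ]
      rw [ENNReal.toReal_sub_of_le prob_le_one ENNReal.one_ne_top, ENNReal.toReal_one]
      linarith [key2 j]
    -- averaging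
    rw [hAeq, hBeq, ← hminABdef]
    have hNpos : (0:ℝ) < N := Nat.cast_pos.2 hN
    have h1 : (N:ℝ) * (1 - minAB) ≤ ∑ j, (μ {ω | yhat j ω ≠ y j ω}).toReal := by
      calc (N:ℝ) * (1 - minAB) = ∑ _j : Fin N, (1 - minAB) := by
            rw [Finset.sum_const, Finset.card_univ, Fintype.card_fin, nsmul_eq_mul]
        _ ≤ _ := Finset.sum_le_sum fun j _ => key3 j
    calc 1 - minAB = (N:ℝ)⁻¹ * ((N:ℝ) * (1 - minAB)) := by
          field_simp
      _ ≤ (N : ℝ)⁻¹ * ∑ j, (μ {ω | yhat j ω ≠ y j ω}).toReal :=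
          mul_le_mul_of_nonneg_left h1 (inv_nonneg.2 hNpos.le)
end
end

section
/- Under the Dawid–Skene model with a decomposable aggregation rule: for every item j, if τ_j^min ≥ 0, then P(ŷ_j ≠ y_j) ≤ (L−1)·min{ exp(−(τ_j^min)²/2), exp(−(τ_j^min)²/(2·(σ² + c·τ_j^min/3))) }. -/
open MeasureTheory ProbabilityTheory Real

noncomputable section

section AuxProofs
open Finset

namespace CrowdAux


lemma nn_deriv {f f' : ℝ → ℝ} (hd : ∀ x, HasDerivAt f (f' x) x)
    (h0 : f 0 = 0) (h' : ∀ x, 0 ≤ x → 0 ≤ f' x) : ∀ x, 0 ≤ x → 0 ≤ f x := by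
  intro x hx
  have hmono : MonotoneOn f (Set.Ici 0) := by
    apply monotoneOn_of_deriv_nonneg (convex_Ici 0)
    · exact fun y _ => (hd y).continuousAt.continuousWithinAt
    · exact fun y _ => (hd y).differentiableAt.differentiableWithinAt
    · intro y hy
      rw [interior_Ici] at hy
      rw [(hd y).deriv]
      exact h' y hy.le
  calc (0:ℝ) = f 0 := h0.symm
  _ ≤ f x := hmono Set.self_mem_Ici hx hx

lemma psi_nonneg : ∀ u : ℝ, 0 ≤ u → 0 ≤ (u - 2) * exp u + u + 2 := by
  have h2 : ∀ u : ℝ, 0 ≤ u → 0 ≤ (u - 1) * exp u + 1 := by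
    apply nn_deriv (f' := fun u => u * exp u)
    · intro u
      have h : HasDerivAt (fun u : ℝ => (u - 1) * exp u + 1)
          ((1 : ℝ) * exp u + (u - 1) * exp u) u := by
        exact (((hasDerivAt_id u).sub_const 1).mul (Real.hasDerivAt_exp u)).add_const 1
      convert h using 1; ring
    · simp
    · intro u hu; positivity
  apply nn_deriv (f' := fun u => (u - 1) * exp u + 1)
  · intro u
    have h : HasDerivAt (fun u : ℝ => (u - 2) * exp u + u + 2)
        (((1 : ℝ) * exp u + (u - 2) * exp u) + 1) u := by
      exact ((((hasDerivAt_id u).sub_const 2).mul (Real.hasDerivAt_exp u)).add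
        (hasDerivAt_id u)).add_const 2
    convert h using 1; ring
  · simp
  · exact h2

lemma bennett_ineq : ∀ u : ℝ, 0 ≤ u → (1 - u / 3) * (exp u - 1 - u) ≤ u ^ 2 / 2 := by
  have key : ∀ u : ℝ, 0 ≤ u → 0 ≤ u ^ 2 / 2 - (1 - u / 3) * (exp u - 1 - u) := by
    apply nn_deriv (f' := fun u => ((u - 2) * exp u + u + 2) / 3)
    · intro u
      have h : HasDerivAt (fun u : ℝ => u ^ 2 / 2 - (1 - u / 3) * (exp u - 1 - u))
          ((2 : ℕ) * u ^ 1 / 2 - ((0 - 1 / 3) * (exp u - 1 - u)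
            + (1 - u / 3) * (exp u - 0 - 1))) u := by
        refine HasDerivAt.sub ?_ (HasDerivAt.mul ?_ ?_)
        · exact (hasDerivAt_pow 2 u).div_const 2
        · exact (hasDerivAt_const u 1).sub ((hasDerivAt_id u).div_const 3)
        · exact ((Real.hasDerivAt_exp u).sub (hasDerivAt_const u 1)).sub (hasDerivAt_id u)
      convert h using 1; ring
    · simp
    · intro u hu
      have := psi_nonneg u hu
      linarith
  intro u hu
  have := key u hu
  linarith

variable {ι : Type*} [Fintype ι]

lemma sum_pos_of_sum_one (w : ι → ℝ) (hw : ∀ x, 0 ≤ w x) (hw1 : ∑ x, w x = 1)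
    (g : ι → ℝ) (hg : ∀ x, 0 < g x) : 0 < ∑ x, w x * g x := by
  obtain ⟨x, hx⟩ : ∃ x, 0 < w x := by
    by_contra h
    push_neg at h
    have : ∀ x, w x = 0 := fun x => le_antisymm (h x) (hw x)
    simp [this] at hw1
  calc (0:ℝ) < w x * g x := mul_pos hx (hg x)
  _ ≤ ∑ y, w y * g y :=
      Finset.single_le_sum (fun y _ => mul_nonneg (hw y) (hg y).le) (mem_univ x)

/-- Hoeffding's lemma for a finitely supported distribution on `[-b, b]`. -/
lemma hoeffding_factor (w v : ι → ℝ) (hw : ∀ x, 0 ≤ w x) (hw1 : ∑ x, w x = 1)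
    (b : ℝ) (hv : ∀ x, |v x| ≤ b) (t : ℝ) (ht : 0 ≤ t) :
    ∑ x, w x * exp (t * v x)
      ≤ exp (t * (∑ x, w x * v x) + t ^ 2 * b ^ 2 / 2) := by
  set m : ℝ := ∑ x, w x * v x with hm
  set S : ℝ → ℝ := fun s => ∑ x, w x * exp (s * v x) with hS
  set S₁ : ℝ → ℝ := fun s => ∑ x, w x * (v x * exp (s * v x)) with hS₁
  set S₂ : ℝ → ℝ := fun s => ∑ x, w x * (v x ^ 2 * exp (s * v x)) with hS₂
  have hSpos : ∀ s, 0 < S s := fun s =>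
    sum_pos_of_sum_one w hw hw1 _ (fun x => exp_pos _)
  have hDS : ∀ s, HasDerivAt S (S₁ s) s := by
    intro s
    apply HasDerivAt.fun_sum
    intro x _
    have : HasDerivAt (fun s : ℝ => s * v x) (v x) s := hasDerivAt_mul_const (v x)
    exact (this.exp.const_mul (w x)).congr_deriv (by ring)
  have hDS₁ : ∀ s, HasDerivAt S₁ (S₂ s) s := by
    intro s
    apply HasDerivAt.fun_sum
    intro x _
    have : HasDerivAt (fun s : ℝ => s * v x) (v x) s := hasDerivAt_mul_const (v x)
    exact ((this.exp.const_mul (v x)).const_mul (w x)).congr_deriv (by ring)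
  -- g₁ is the derivative of g below
  set g₁ : ℝ → ℝ := fun s => m + s * b ^ 2 - S₁ s / S s with hg₁
  have hS0 : S 0 = 1 := by simp [hS, hw1]
  have hS₁0 : S₁ 0 = m := by simp [hS₁, hm]
  have hne : Nonempty ι := by
    rcases isEmpty_or_nonempty ι with h | h
    · rw [Finset.univ_eq_empty] at hw1; simp at hw1
    · exact h
  have hb : 0 ≤ b := le_trans (abs_nonneg _) (hv (Classical.arbitrary ι))
  have hg₁0 : g₁ 0 = 0 := by simp [hg₁, hS0, hS₁0]
  have hDg₁ : ∀ s, HasDerivAt g₁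
      (b ^ 2 - (S₂ s * S s - S₁ s * S₁ s) / S s ^ 2) s := by
    intro s
    have hdiv := (hDS₁ s).div (hDS s) (hSpos s).ne'
    exact (((hasDerivAt_mul_const (b ^ 2)).const_add m).sub hdiv)
  have hg₁nn : ∀ s, 0 ≤ s → 0 ≤ g₁ s := by
    apply nn_deriv hDg₁ hg₁0
    intro s _
    have h1 : S₂ s ≤ b ^ 2 * S s := by
      rw [hS₂, hS, Finset.mul_sum]
      apply Finset.sum_le_sum
      intro x _
      have hv2 : v x ^ 2 ≤ b ^ 2 := by
        calc v x ^ 2 = |v x| ^ 2 := (sq_abs _).symm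
        _ ≤ b ^ 2 := pow_le_pow_left₀ (abs_nonneg _) (hv x) 2
      nlinarith [mul_nonneg (hw x) (sub_nonneg.mpr hv2), (exp_pos (s * v x)).le,
        mul_nonneg (mul_nonneg (hw x) (sub_nonneg.mpr hv2)) (exp_pos (s * v x)).le]
    rw [sub_nonneg, div_le_iff₀ (pow_pos (hSpos s) 2)]
    nlinarith [mul_le_mul_of_nonneg_right h1 (hSpos s).le, sq_nonneg (S₁ s)]
  have hgnn : ∀ s, 0 ≤ s → 0 ≤ s * m + s ^ 2 * b ^ 2 / 2 - log (S s) := by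
    apply nn_deriv (f' := g₁)
    · intro s
      have h : HasDerivAt (fun s : ℝ => s * m + s ^ 2 * b ^ 2 / 2 - log (S s))
          ((m + ((2 : ℕ) * s ^ 1) * b ^ 2 / 2) - S₁ s / S s) s := by
        refine HasDerivAt.sub ?_ ((hDS s).log (hSpos s).ne')
        exact (hasDerivAt_mul_const m).add
          (((hasDerivAt_pow 2 s).mul_const (b ^ 2)).div_const 2)
      refine h.congr_deriv ?_
      simp only [hg₁]; push_cast; ring
    · simp [hS0]
    · exact hg₁nn
  have := hgnn t ht
  calc S t = exp (log (S t)) := (exp_log (hSpos t)).symm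
  _ ≤ exp (t * m + t ^ 2 * b ^ 2 / 2) := exp_le_exp.mpr (by linarith)

lemma exp_chord (B : ℝ) (hB : 0 < B) (t : ℝ) (ht : 0 ≤ t) (v : ℝ) (hv : |v| ≤ B) :
    v * (exp (t * v) - 1) ≤ v ^ 2 * (exp (t * B) - 1) / B := by
  rcases le_or_gt 0 v with h | h
  · have hvB : v ≤ B := le_trans (le_abs_self v) hv
    have hconv : exp ((1 - v / B) * 0 + v / B * (t * B))
        ≤ (1 - v / B) * exp 0 + v / B * exp (t * B) := by
      exact convexOn_exp.2 (Set.mem_univ (0 : ℝ)) (Set.mem_univ (t * B))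
        (by rw [sub_nonneg]; exact div_le_one_of_le₀ hvB hB.le)
        (by positivity) (by ring)
    rw [exp_zero] at hconv
    have harg : (1 - v / B) * 0 + v / B * (t * B) = t * v := by field_simp; ring
    rw [harg] at hconv
    have h2 : exp (t * v) - 1 ≤ v / B * (exp (t * B) - 1) := by nlinarith
    calc v * (exp (t * v) - 1) ≤ v * (v / B * (exp (t * B) - 1)) :=
          mul_le_mul_of_nonneg_left h2 h
    _ = v ^ 2 * (exp (t * B) - 1) / B := by field_simp
  · have h1 : t * v + 1 ≤ exp (t * v) := add_one_le_exp _
    have h2 : t * B + 1 ≤ exp (t * B) := add_one_le_exp _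
    have h3 : v * (exp (t * v) - 1) ≤ v * (t * v) := by nlinarith
    have h4 : t ≤ (exp (t * B) - 1) / B := by rw [le_div_iff₀ hB]; nlinarith
    calc v * (exp (t * v) - 1) ≤ t * v ^ 2 := by nlinarith
    _ ≤ v ^ 2 * (exp (t * B) - 1) / B := by
        rw [mul_div_assoc, mul_comm t (v ^ 2)]
        exact mul_le_mul_of_nonneg_left h4 (sq_nonneg v)

/-- Bernstein MGF factor bound. -/
lemma bernstein_factor (w v : ι → ℝ) (hw : ∀ x, 0 ≤ w x) (hw1 : ∑ x, w x = 1)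
    (B : ℝ) (hB : 0 < B) (hv : ∀ x, |v x| ≤ B) (t : ℝ) (ht : 0 ≤ t) :
    ∑ x, w x * exp (t * v x)
      ≤ exp (t * (∑ x, w x * v x)
          + (∑ x, w x * v x ^ 2) * (exp (t * B) - 1 - t * B) / B ^ 2) := by
  set m : ℝ := ∑ x, w x * v x with hm
  set Q : ℝ := ∑ x, w x * v x ^ 2 with hQ
  set S : ℝ → ℝ := fun s => ∑ x, w x * exp (s * v x) with hS
  set S₁ : ℝ → ℝ := fun s => ∑ x, w x * (v x * exp (s * v x)) with hS₁
  have hDS : ∀ s, HasDerivAt S (S₁ s) s := by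
    intro s
    apply HasDerivAt.fun_sum
    intro x _
    have : HasDerivAt (fun s : ℝ => s * v x) (v x) s := hasDerivAt_mul_const (v x)
    exact (this.exp.const_mul (w x)).congr_deriv (by ring)
  set Φ : ℝ → ℝ := fun s =>
    1 + s * m + Q * (exp (s * B) - 1 - s * B) / B ^ 2 - S s with hΦ
  set Φ₁ : ℝ → ℝ := fun s => m + Q * (exp (s * B) - 1) / B - S₁ s with hΦ₁
  have hDΦ : ∀ s, HasDerivAt Φ (Φ₁ s) s := by
    intro s
    have hsB : HasDerivAt (fun s : ℝ => s * B) B s := hasDerivAt_mul_const B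
    have h : HasDerivAt Φ
        ((m + Q * ((exp (s * B) * B - 0) - B) / B ^ 2) - S₁ s) s := by
      refine HasDerivAt.sub ?_ (hDS s)
      refine HasDerivAt.add ?_ ?_
      · exact ((hasDerivAt_mul_const m).const_add 1)
      · exact (((hsB.exp.sub (hasDerivAt_const s 1)).sub hsB).const_mul Q).div_const (B ^ 2)
    refine h.congr_deriv ?_
    simp only [hΦ₁]
    field_simp
    ring
  have hΦ0 : Φ 0 = 0 := by
    simp [hΦ, hS, hw1]
  have hΦ₁nn : ∀ s, 0 ≤ s → 0 ≤ Φ₁ s := by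
    intro s hs
    have key : S₁ s - m ≤ Q * (exp (s * B) - 1) / B := by
      have h1 : S₁ s - m = ∑ x, w x * (v x * (exp (s * v x) - 1)) := by
        rw [hS₁, hm, ← Finset.sum_sub_distrib]
        apply Finset.sum_congr rfl
        intro x _; ring
      have h2 : Q * (exp (s * B) - 1) / B
          = ∑ x, w x * (v x ^ 2 * (exp (s * B) - 1) / B) := by
        rw [hQ, Finset.sum_mul, Finset.sum_div]
        apply Finset.sum_congr rfl
        intro x _; ring
      rw [h1, h2]
      apply Finset.sum_le_sum
      intro x _
      exact mul_le_mul_of_nonneg_left (exp_chord B hB s hs (v x) (hv x)) (hw x)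
    simp only [hΦ₁]
    linarith
  have hΦnn := nn_deriv hDΦ hΦ0 hΦ₁nn t ht
  have h2 : S t ≤ 1 + (t * m + Q * (exp (t * B) - 1 - t * B) / B ^ 2) := by
    simp only [hΦ] at hΦnn; linarith
  calc S t ≤ 1 + (t * m + Q * (exp (t * B) - 1 - t * B) / B ^ 2) := h2
  _ ≤ exp (t * m + Q * (exp (t * B) - 1 - t * B) / B ^ 2) := by
      rw [add_comm]
      exact add_one_le_exp _

end CrowdAux

section Part2
open CrowdDS CrowdAux

variable {Ω : Type*} [MeasurableSpace Ω] {M N L : ℕ}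

/-- Decomposition of the probability of an event depending on the worker labels. -/
lemma meas_eq (μ : Measure Ω) [IsProbabilityMeasure μ]
    (y : Fin N → Ω → Fin L) (Z : Fin M → Fin N → Ω → Fin (L + 1))
    (hym : ∀ j, Measurable (y j)) (hZm : ∀ i j, Measurable (Z i j))
    (pri : Fin L → ℝ) (q : Fin M → Fin N → ℝ) (p : Fin M → Fin L → Fin L → ℝ)
    (hlaw : ∀ (j : Fin N) (k : Fin L) (h : Fin M → Fin (L + 1)),
      (μ {ω | y j ω = k ∧ ∀ i, Z i j ω = h i}).toReal
        = pri k * ∏ i, CrowdDS.condLaw q p i j k (h i))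
    (j : Fin N) (k : Fin L) (φ : (Fin M → Fin (L + 1)) → Prop) [DecidablePred φ] :
    (μ {ω | y j ω = k ∧ φ (fun i => Z i j ω)}).toReal
      = ∑ h : Fin M → Fin (L + 1), if φ h then
          pri k * ∏ i, CrowdDS.condLaw q p i j k (h i) else 0 := by
  set A : (Fin M → Fin (L + 1)) → Set Ω :=
    fun h => {ω | y j ω = k ∧ ∀ i, Z i j ω = h i} with hA
  have hAm : ∀ h, MeasurableSet (A h) := by
    intro h
    have : A h = (y j ⁻¹' {k}) ∩ ⋂ i, Z i j ⁻¹' {h i} := by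
      ext ω; simp [hA, Set.mem_iInter]
    rw [this]
    exact ((hym j) (measurableSet_singleton k)).inter
      (MeasurableSet.iInter fun i => (hZm i j) (measurableSet_singleton (h i)))
  have hset : {ω | y j ω = k ∧ φ (fun i => Z i j ω)}
      = ⋃ h ∈ Finset.univ.filter (fun h => φ h), A h := by
    ext ω
    simp only [Set.mem_setOf_eq, Set.mem_iUnion, Finset.mem_filter, Finset.mem_univ,
      true_and, hA]
    constructor
    · rintro ⟨hy, hφ⟩
      exact ⟨fun i => Z i j ω, hφ, hy, fun i => rfl⟩
    · rintro ⟨h, hφ, hy, hz⟩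
      have he : (fun i => Z i j ω) = h := funext hz
      exact ⟨hy, by rw [he]; exact hφ⟩
  have hdisj : (↑(Finset.univ.filter (fun h => φ h)) :
      Set (Fin M → Fin (L + 1))).PairwiseDisjoint A := by
    intro h1 _ h2 _ hne
    rw [Function.onFun, Set.disjoint_left]
    rintro ω ⟨_, hz1⟩ ⟨_, hz2⟩
    exact hne (funext fun i => (hz1 i).symm.trans (hz2 i))
  rw [hset, measure_biUnion_finset hdisj (fun h _ => hAm h),
    ENNReal.toReal_sum (fun h _ => measure_ne_top μ _)]
  rw [Finset.sum_filter]
  apply Finset.sum_congr rfl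
  intro h _
  split
  · exact hlaw j k h
  · rfl

/-- Chernoff bound for the event that label `l` beats the true label `k`. -/
lemma chernoff (μ : Measure Ω) [IsProbabilityMeasure μ]
    (y : Fin N → Ω → Fin L) (Z : Fin M → Fin N → Ω → Fin (L + 1))
    (hym : ∀ j, Measurable (y j)) (hZm : ∀ i j, Measurable (Z i j))
    (pri : Fin L → ℝ) (q : Fin M → Fin N → ℝ) (p : Fin M → Fin L → Fin L → ℝ)
    (hpri : ∀ k, 0 ≤ pri k) (hq0 : ∀ i j, 0 ≤ q i j) (hq1 : ∀ i j, q i j ≤ 1)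
    (hp0 : ∀ i k h, 0 ≤ p i k h)
    (hlaw : ∀ (j : Fin N) (k : Fin L) (h : Fin M → Fin (L + 1)),
      (μ {ω | y j ω = k ∧ ∀ i, Z i j ω = h i}).toReal
        = pri k * ∏ i, CrowdDS.condLaw q p i j k (h i))
    (f : Fin M → Fin L → Fin (L + 1) → ℝ) (a : Fin L → ℝ)
    (j : Fin N) (k l : Fin L) (lam : ℝ) (hlam : 0 ≤ lam) :
    (μ {ω | y j ω = k ∧
        (∑ i, f i k (Z i j ω)) + a k ≤ (∑ i, f i l (Z i j ω)) + a l}).toReal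
      ≤ pri k * Real.exp (lam * (a l - a k)) *
          ∏ i, ∑ x, CrowdDS.condLaw q p i j k x * Real.exp (lam * (f i l x - f i k x)) := by
  classical
  have hcl0 : ∀ i x, 0 ≤ CrowdDS.condLaw q p i j k x := by
    intro i x
    unfold CrowdDS.condLaw
    split
    · linarith [hq1 i j]
    · exact mul_nonneg (hq0 i j) (hp0 _ _ _)
  set φ : (Fin M → Fin (L + 1)) → Prop :=
    fun h => (∑ i, f i k (h i)) + a k ≤ (∑ i, f i l (h i)) + a l with hφ
  have heq : {ω | y j ω = k ∧
        (∑ i, f i k (Z i j ω)) + a k ≤ (∑ i, f i l (Z i j ω)) + a l}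
      = {ω | y j ω = k ∧ φ (fun i => Z i j ω)} := rfl
  rw [heq, meas_eq μ y Z hym hZm pri q p hlaw j k φ]
  have step1 : ∑ h : Fin M → Fin (L + 1), (if φ h then
        pri k * ∏ i, CrowdDS.condLaw q p i j k (h i) else 0)
      ≤ ∑ h : Fin M → Fin (L + 1),
          (pri k * ∏ i, CrowdDS.condLaw q p i j k (h i)) *
            Real.exp (lam * ((∑ i, (f i l (h i) - f i k (h i))) + (a l - a k))) := by
    apply Finset.sum_le_sum
    intro h _
    have hw : 0 ≤ pri k * ∏ i, CrowdDS.condLaw q p i j k (h i) :=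
      mul_nonneg (hpri k) (Finset.prod_nonneg fun i _ => hcl0 i (h i))
    split
    · rename_i hφh
      nth_rewrite 1 [← mul_one (pri k * ∏ i, CrowdDS.condLaw q p i j k (h i))]
      apply mul_le_mul_of_nonneg_left _ hw
      rw [← Real.exp_zero]
      apply Real.exp_le_exp.mpr
      have harg : 0 ≤ (∑ i, (f i l (h i) - f i k (h i))) + (a l - a k) := by
        simp only [hφ] at hφh
        rw [Finset.sum_sub_distrib]
        linarith
      positivity
    · positivity
  refine le_trans step1 (le_of_eq ?_)
  have step2 : ∀ h : Fin M → Fin (L + 1),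
      (pri k * ∏ i, CrowdDS.condLaw q p i j k (h i)) *
        Real.exp (lam * ((∑ i, (f i l (h i) - f i k (h i))) + (a l - a k)))
      = pri k * Real.exp (lam * (a l - a k)) *
          ∏ i, (CrowdDS.condLaw q p i j k (h i) *
            Real.exp (lam * (f i l (h i) - f i k (h i)))) := by
    intro h
    have harg : lam * ((∑ i, (f i l (h i) - f i k (h i))) + (a l - a k))
        = lam * (a l - a k) + ∑ i, lam * (f i l (h i) - f i k (h i)) := by
      rw [mul_add, Finset.mul_sum, add_comm]
    rw [harg, Real.exp_add, Real.exp_sum, Finset.prod_mul_distrib]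
    ring
  rw [Finset.sum_congr rfl (fun h _ => step2 h)]
  rw [← Finset.mul_sum]
  congr 1
  rw [Finset.prod_univ_sum (fun _ => Finset.univ)
    (fun i x => CrowdDS.condLaw q p i j k x * Real.exp (lam * (f i l x - f i k x)))]
  rw [Fintype.piFinset_univ]

section Sups
open CrowdDS

variable {M N L : ℕ}

/-- Per-worker bound `b_i`. -/
def bi (f : Fin M → Fin L → Fin (L + 1) → ℝ) (i : Fin M) : ℝ :=
  sSup {x : ℝ | ∃ k l h : Fin L, k ≠ l ∧ x = |f i k h.succ - f i l h.succ|}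

/-- Global bound `B`. -/
def BB (f : Fin M → Fin L → Fin (L + 1) → ℝ) : ℝ :=
  sSup {x : ℝ | ∃ (i : Fin M) (k l h : Fin L), k ≠ l ∧
    x = |f i k h.succ - f i l h.succ|}

lemma kl_ex (hL : 2 ≤ L) : ∃ k l : Fin L, k ≠ l := by
  refine ⟨⟨0, by omega⟩, ⟨1, by omega⟩, ?_⟩
  simp [Fin.ext_iff]

lemma bset_finite (f : Fin M → Fin L → Fin (L + 1) → ℝ) (i : Fin M) :
    {x : ℝ | ∃ k l h : Fin L, k ≠ l ∧ x = |f i k h.succ - f i l h.succ|}.Finite := by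
  apply Set.Finite.subset (Set.finite_range
    (fun z : Fin L × Fin L × Fin L => |f i z.1 z.2.2.succ - f i z.2.1 z.2.2.succ|))
  rintro x ⟨k, l, h, -, rfl⟩
  exact ⟨(k, l, h), rfl⟩

lemma Bset_finite (f : Fin M → Fin L → Fin (L + 1) → ℝ) :
    {x : ℝ | ∃ (i : Fin M) (k l h : Fin L), k ≠ l ∧
      x = |f i k h.succ - f i l h.succ|}.Finite := by
  apply Set.Finite.subset (Set.finite_range
    (fun z : Fin M × Fin L × Fin L × Fin L =>
      |f z.1 z.2.1 z.2.2.2.succ - f z.1 z.2.2.1 z.2.2.2.succ|))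
  rintro x ⟨i, k, l, h, -, rfl⟩
  exact ⟨(i, k, l, h), rfl⟩

lemma le_bi (f : Fin M → Fin L → Fin (L + 1) → ℝ) (i : Fin M) {k l : Fin L}
    (h : Fin L) (hkl : k ≠ l) : |f i k h.succ - f i l h.succ| ≤ bi f i :=
  le_csSup (bset_finite f i).bddAbove ⟨k, l, h, hkl, rfl⟩

lemma le_BB (f : Fin M → Fin L → Fin (L + 1) → ℝ) (i : Fin M) {k l : Fin L}
    (h : Fin L) (hkl : k ≠ l) : |f i k h.succ - f i l h.succ| ≤ BB f :=
  le_csSup (Bset_finite f).bddAbove ⟨i, k, l, h, hkl, rfl⟩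

lemma bi_nonneg (hL : 2 ≤ L) (f : Fin M → Fin L → Fin (L + 1) → ℝ) (i : Fin M) :
    0 ≤ bi f i := by
  obtain ⟨k, l, hkl⟩ := kl_ex (L := L) hL
  exact le_trans (abs_nonneg _) (le_bi f i ⟨0, by omega⟩ hkl)

lemma BB_nonneg (hL : 2 ≤ L) (hM : 0 < M) (f : Fin M → Fin L → Fin (L + 1) → ℝ) :
    0 ≤ BB f := by
  obtain ⟨k, l, hkl⟩ := kl_ex (L := L) hL
  exact le_trans (abs_nonneg _) (le_BB f ⟨0, hM⟩ ⟨0, by omega⟩ hkl)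

lemma bi_le_BB (hL : 2 ≤ L) (f : Fin M → Fin L → Fin (L + 1) → ℝ) (i : Fin M) :
    bi f i ≤ BB f := by
  obtain ⟨k, l, hkl⟩ := kl_ex (L := L) hL
  have hne : {x : ℝ | ∃ k l h : Fin L, k ≠ l ∧ x = |f i k h.succ - f i l h.succ|}.Nonempty :=
    ⟨|f i k (⟨0, by omega⟩ : Fin L).succ - f i l (⟨0, by omega⟩ : Fin L).succ|,
      k, l, ⟨0, by omega⟩, hkl, rfl⟩
  apply csSup_le hne
  rintro x ⟨k', l', h', hkl', rfl⟩
  exact le_BB f i h' hkl'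

lemma nbar_eq (f : Fin M → Fin L → Fin (L + 1) → ℝ) :
    nbar f = Real.sqrt (∑ i, bi f i ^ 2) := rfl

lemma nbar_sq (f : Fin M → Fin L → Fin (L + 1) → ℝ) :
    nbar f ^ 2 = ∑ i, bi f i ^ 2 := by
  rw [nbar_eq, Real.sq_sqrt (Finset.sum_nonneg fun i _ => sq_nonneg _)]

lemma cConst_eq (f : Fin M → Fin L → Fin (L + 1) → ℝ) :
    cConst f = (1 / nbar f) * BB f := rfl

lemma BB_pos (hL : 2 ≤ L) (f : Fin M → Fin L → Fin (L + 1) → ℝ)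
    (hnb : 0 < nbar f) : 0 < BB f := by
  have hsum : 0 < ∑ i, bi f i ^ 2 := by
    rw [← nbar_sq]; positivity
  obtain ⟨i, -, hi⟩ := Finset.exists_lt_of_sum_lt (f := fun _ : Fin M => (0:ℝ))
    (by simpa using hsum)
  have : 0 < bi f i := lt_of_le_of_ne (bi_nonneg hL f i)
    (fun h => by rw [← h] at hi; simp at hi)
  exact lt_of_lt_of_le this (bi_le_BB hL f i)

lemma tauMin_le (f : Fin M → Fin L → Fin (L + 1) → ℝ) (a : Fin L → ℝ)
    (q : Fin M → Fin N → ℝ) (p : Fin M → Fin L → Fin L → ℝ) (j : Fin N)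
    {k l : Fin L} (hkl : k ≠ l) :
    tauMin f a q p j ≤ gap f a q p j k l / nbar f := by
  have hmem : gap f a q p j k l / nbar f ∈ {x : ℝ | ∃ k l : Fin L, k ≠ l ∧
      x = gap f a q p j k l / nbar f} := ⟨k, l, hkl, rfl⟩
  refine csInf_le ?_ hmem
  apply Set.Finite.bddBelow
  apply Set.Finite.subset (Set.finite_range
    (fun z : Fin L × Fin L => gap f a q p j z.1 z.2 / nbar f))
  rintro x ⟨k', l', -, rfl⟩
  exact ⟨(k', l'), rfl⟩

lemma sigma_ge (f : Fin M → Fin L → Fin (L + 1) → ℝ)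
    (q : Fin M → Fin N → ℝ) (p : Fin M → Fin L → Fin L → ℝ)
    (j : Fin N) {k l : Fin L} (hkl : k ≠ l) (hnb : 0 < nbar f) :
    ∑ i, ∑ h : Fin L, q i j * (f i k h.succ - f i l h.succ) ^ 2 * p i k h
      ≤ sigmaSq f q p * nbar f ^ 2 := by
  have hle : ∑ i, ∑ h : Fin L, q i j * (f i k h.succ - f i l h.succ) ^ 2 * p i k h
      ≤ sSup {x : ℝ | ∃ (j : Fin N) (k l : Fin L), k ≠ l ∧
          x = ∑ i, ∑ h : Fin L, q i j * (f i k h.succ - f i l h.succ) ^ 2 * p i k h} := by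
    have hmem : (∑ i, ∑ h : Fin L, q i j * (f i k h.succ - f i l h.succ) ^ 2 * p i k h)
        ∈ {x : ℝ | ∃ (j : Fin N) (k l : Fin L), k ≠ l ∧
          x = ∑ i, ∑ h : Fin L, q i j * (f i k h.succ - f i l h.succ) ^ 2 * p i k h} :=
      ⟨j, k, l, hkl, rfl⟩
    refine le_csSup ?_ hmem
    apply Set.Finite.bddAbove
    apply Set.Finite.subset (Set.finite_range
      (fun z : Fin N × Fin L × Fin L =>
        ∑ i, ∑ h : Fin L, q i z.1 * (f i z.2.1 h.succ - f i z.2.2 h.succ) ^ 2 * p i z.2.1 h))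
    rintro x ⟨j', k', l', -, rfl⟩
    exact ⟨(j', k', l'), rfl⟩
  calc _ ≤ _ := hle
  _ = sigmaSq f q p * nbar f ^ 2 := by
      rw [sigmaSq]
      field_simp

lemma sigmaSq_nonneg (hL : 2 ≤ L) (hN : 0 < N) (f : Fin M → Fin L → Fin (L + 1) → ℝ)
    (q : Fin M → Fin N → ℝ) (p : Fin M → Fin L → Fin L → ℝ)
    (hq0 : ∀ i j, 0 ≤ q i j) (hp0 : ∀ i k h, 0 ≤ p i k h) :
    0 ≤ sigmaSq f q p := by
  obtain ⟨k, l, hkl⟩ := kl_ex (L := L) hL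
  have h1 : (0:ℝ) ≤ ∑ i, ∑ h : Fin L,
      q i (⟨0, hN⟩ : Fin N) * (f i k h.succ - f i l h.succ) ^ 2 * p i k h := by
    apply Finset.sum_nonneg; intro i _
    apply Finset.sum_nonneg; intro h _
    have := hq0 i (⟨0, hN⟩ : Fin N)
    have := hp0 i k h
    positivity
  have h2 : (0:ℝ) ≤ sSup {x : ℝ | ∃ (j : Fin N) (k l : Fin L), k ≠ l ∧
      x = ∑ i, ∑ h : Fin L, q i j * (f i k h.succ - f i l h.succ) ^ 2 * p i k h} := by
    refine le_trans h1 (le_csSup ?_ ⟨⟨0, hN⟩, k, l, hkl, rfl⟩)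
    apply Set.Finite.bddAbove
    apply Set.Finite.subset (Set.finite_range
      (fun z : Fin N × Fin L × Fin L =>
        ∑ i, ∑ h : Fin L, q i z.1 * (f i z.2.1 h.succ - f i z.2.2 h.succ) ^ 2 * p i z.2.1 h))
    rintro x ⟨j', k', l', -, rfl⟩
    exact ⟨(j', k', l'), rfl⟩
  rw [sigmaSq]
  have : (0:ℝ) ≤ 1 / nbar f ^ 2 := by positivity
  exact mul_nonneg this h2

lemma cConst_nonneg (hL : 2 ≤ L) (hM : 0 < M) (f : Fin M → Fin L → Fin (L + 1) → ℝ) :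
    0 ≤ cConst f := by
  rw [cConst_eq]
  have h1 : (0:ℝ) ≤ 1 / nbar f := by
    have : 0 ≤ nbar f := Real.sqrt_nonneg _
    positivity
  exact mul_nonneg h1 (BB_nonneg hL hM f)

-- condLaw lemmas
lemma cl_nonneg (q : Fin M → Fin N → ℝ) (p : Fin M → Fin L → Fin L → ℝ)
    (hq0 : ∀ i j, 0 ≤ q i j) (hq1 : ∀ i j, q i j ≤ 1) (hp0 : ∀ i k h, 0 ≤ p i k h)
    (i : Fin M) (j : Fin N) (k : Fin L) (x : Fin (L + 1)) :
    0 ≤ condLaw q p i j k x := by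
  unfold condLaw
  split
  · linarith [hq1 i j]
  · exact mul_nonneg (hq0 i j) (hp0 _ _ _)

lemma cl_zero (q : Fin M → Fin N → ℝ) (p : Fin M → Fin L → Fin L → ℝ)
    (i : Fin M) (j : Fin N) (k : Fin L) :
    condLaw q p i j k 0 = 1 - q i j := by simp [condLaw]

lemma cl_succ (q : Fin M → Fin N → ℝ) (p : Fin M → Fin L → Fin L → ℝ)
    (i : Fin M) (j : Fin N) (k : Fin L) (h : Fin L) :
    condLaw q p i j k h.succ = q i j * p i k h := by
  rw [condLaw, dif_neg (Fin.succ_ne_zero h), Fin.pred_succ]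

lemma cl_sum (q : Fin M → Fin N → ℝ) (p : Fin M → Fin L → Fin L → ℝ)
    (hp1 : ∀ i k, ∑ h, p i k h = 1) (i : Fin M) (j : Fin N) (k : Fin L) :
    ∑ x : Fin (L + 1), condLaw q p i j k x = 1 := by
  rw [Fin.sum_univ_succ, cl_zero]
  simp_rw [cl_succ]
  rw [← Finset.mul_sum, hp1]
  ring

lemma cl_moment (q : Fin M → Fin N → ℝ) (p : Fin M → Fin L → Fin L → ℝ)
    (i : Fin M) (j : Fin N) (k : Fin L) (g : Fin (L + 1) → ℝ) (hg0 : g 0 = 0) :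
    ∑ x : Fin (L + 1), condLaw q p i j k x * g x
      = ∑ h : Fin L, q i j * p i k h * g h.succ := by
  rw [Fin.sum_univ_succ, hg0]
  simp [cl_succ, mul_assoc]

end Sups

section KL
open CrowdDS CrowdAux

variable {Ω : Type*} [MeasurableSpace Ω] {M N L : ℕ}

lemma gap_id (f : Fin M → Fin L → Fin (L + 1) → ℝ) (a : Fin L → ℝ)
    (q : Fin M → Fin N → ℝ) (p : Fin M → Fin L → Fin L → ℝ) (j : Fin N) (k l : Fin L) :
    (a l - a k) + ∑ i, ∑ h : Fin L, q i j * p i k h * (f i l h.succ - f i k h.succ)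
      = -(gap f a q p j k l) := by
  have h1 : ∑ i, ∑ h : Fin L, (q i j * p i k h * (f i l h.succ - f i k h.succ)
      + q i j * (f i k h.succ - f i l h.succ) * p i k h) = 0 := by
    apply Finset.sum_eq_zero; intro i _
    apply Finset.sum_eq_zero; intro h _
    ring
  simp only [Finset.sum_add_distrib] at h1
  rw [gap]
  linarith

lemma hoeff_kl (μ : Measure Ω) [IsProbabilityMeasure μ] (hL : 2 ≤ L)
    (y : Fin N → Ω → Fin L) (Z : Fin M → Fin N → Ω → Fin (L + 1))
    (hym : ∀ j, Measurable (y j)) (hZm : ∀ i j, Measurable (Z i j))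
    (pri : Fin L → ℝ) (q : Fin M → Fin N → ℝ) (p : Fin M → Fin L → Fin L → ℝ)
    (hpri : ∀ k, 0 ≤ pri k) (hq0 : ∀ i j, 0 ≤ q i j) (hq1 : ∀ i j, q i j ≤ 1)
    (hp0 : ∀ i k h, 0 ≤ p i k h) (hp1 : ∀ i k, ∑ h, p i k h = 1)
    (hlaw : ∀ (j : Fin N) (k : Fin L) (h : Fin M → Fin (L + 1)),
      (μ {ω | y j ω = k ∧ ∀ i, Z i j ω = h i}).toReal
        = pri k * ∏ i, CrowdDS.condLaw q p i j k (h i))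
    (f : Fin M → Fin L → Fin (L + 1) → ℝ) (hf0 : ∀ i k k', f i k 0 = f i k' 0)
    (a : Fin L → ℝ) (j : Fin N) (k l : Fin L) (hkl : k ≠ l)
    (hnb : 0 < nbar f) (ht : 0 ≤ tauMin f a q p j) :
    (μ {ω | y j ω = k ∧
        (∑ i, f i k (Z i j ω)) + a k ≤ (∑ i, f i l (Z i j ω)) + a l}).toReal
      ≤ pri k * Real.exp (-(tauMin f a q p j) ^ 2 / 2) := by
  set t := tauMin f a q p j with htd
  set lam := t / nbar f with hlamd
  have hlam : 0 ≤ lam := div_nonneg ht hnb.le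
  have hch := chernoff μ y Z hym hZm pri q p hpri hq0 hq1 hp0 hlaw f a j k l lam hlam
  have hcln : ∀ i x, 0 ≤ condLaw q p i j k x :=
    fun i x => cl_nonneg q p hq0 hq1 hp0 i j k x
  have hvb : ∀ i x, |f i l x - f i k x| ≤ bi f i := by
    intro i x
    refine Fin.cases ?_ ?_ x
    · rw [hf0 i l k]; simpa using bi_nonneg hL f i
    · intro h; exact le_bi f i h hkl.symm
  have hfac : ∀ i, ∑ x, condLaw q p i j k x * Real.exp (lam * (f i l x - f i k x))
      ≤ Real.exp (lam * (∑ x, condLaw q p i j k x * (f i l x - f i k x))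
          + lam ^ 2 * bi f i ^ 2 / 2) := fun i =>
    hoeffding_factor _ _ (hcln i) (cl_sum q p hp1 i j k) (bi f i) (hvb i) lam hlam
  have hprod : (∏ i, ∑ x, condLaw q p i j k x * Real.exp (lam * (f i l x - f i k x)))
      ≤ Real.exp (∑ i, (lam * (∑ x, condLaw q p i j k x * (f i l x - f i k x))
          + lam ^ 2 * bi f i ^ 2 / 2)) := by
    rw [Real.exp_sum]
    exact Finset.prod_le_prod (fun i _ => Finset.sum_nonneg fun x _ =>
      mul_nonneg (hcln i x) (Real.exp_pos _).le) (fun i _ => hfac i)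
  set SM := ∑ i, ∑ h : Fin L, q i j * p i k h * (f i l h.succ - f i k h.succ) with hSM
  have hm : ∀ i, ∑ x, condLaw q p i j k x * (f i l x - f i k x)
      = ∑ h : Fin L, q i j * p i k h * (f i l h.succ - f i k h.succ) := fun i =>
    cl_moment q p i j k _ (by rw [hf0 i l k]; ring)
  have hexp : ∑ i, (lam * (∑ x, condLaw q p i j k x * (f i l x - f i k x))
      + lam ^ 2 * bi f i ^ 2 / 2) = lam * SM + lam ^ 2 * nbar f ^ 2 / 2 := by
    rw [Finset.sum_add_distrib, hSM]
    congr 1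
    · rw [← Finset.mul_sum]
      congr 1
      exact Finset.sum_congr rfl fun i _ => hm i
    · rw [nbar_sq, Finset.mul_sum, Finset.sum_div]
  rw [hexp] at hprod
  have hgap := gap_id f a q p j k l
  have hgap2 : t * nbar f ≤ gap f a q p j k l := by
    have := tauMin_le f a q p j hkl
    rw [← htd] at this
    exact (le_div_iff₀ hnb).mp this
  have e1 : lam * nbar f = t := by
    rw [hlamd]; field_simp
  have hE : lam * (a l - a k) + (lam * SM + lam ^ 2 * nbar f ^ 2 / 2)
      ≤ -t ^ 2 / 2 := by
    have h3 : lam * ((a l - a k) + SM) = lam * (-(gap f a q p j k l)) := by rw [hgap]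
    have h4 : lam * (t * nbar f) ≤ lam * gap f a q p j k l :=
      mul_le_mul_of_nonneg_left hgap2 hlam
    nlinarith [e1, h3, h4]
  calc (μ {ω | y j ω = k ∧
        (∑ i, f i k (Z i j ω)) + a k ≤ (∑ i, f i l (Z i j ω)) + a l}).toReal
      ≤ pri k * Real.exp (lam * (a l - a k)) *
          ∏ i, ∑ x, condLaw q p i j k x * Real.exp (lam * (f i l x - f i k x)) := hch
  _ ≤ pri k * Real.exp (lam * (a l - a k)) *
        Real.exp (lam * SM + lam ^ 2 * nbar f ^ 2 / 2) := by
      apply mul_le_mul_of_nonneg_left hprod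
      exact mul_nonneg (hpri k) (Real.exp_pos _).le
  _ = pri k * Real.exp (lam * (a l - a k) + (lam * SM + lam ^ 2 * nbar f ^ 2 / 2)) := by
      simp only [Real.exp_add]; ring
  _ ≤ pri k * Real.exp (-t ^ 2 / 2) :=
      mul_le_mul_of_nonneg_left (Real.exp_le_exp.mpr hE) (hpri k)

lemma bern_kl (μ : Measure Ω) [IsProbabilityMeasure μ] (hL : 2 ≤ L) (hN : 0 < N)
    (y : Fin N → Ω → Fin L) (Z : Fin M → Fin N → Ω → Fin (L + 1))
    (hym : ∀ j, Measurable (y j)) (hZm : ∀ i j, Measurable (Z i j))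
    (pri : Fin L → ℝ) (q : Fin M → Fin N → ℝ) (p : Fin M → Fin L → Fin L → ℝ)
    (hpri : ∀ k, 0 ≤ pri k) (hq0 : ∀ i j, 0 ≤ q i j) (hq1 : ∀ i j, q i j ≤ 1)
    (hp0 : ∀ i k h, 0 ≤ p i k h) (hp1 : ∀ i k, ∑ h, p i k h = 1)
    (hlaw : ∀ (j : Fin N) (k : Fin L) (h : Fin M → Fin (L + 1)),
      (μ {ω | y j ω = k ∧ ∀ i, Z i j ω = h i}).toReal
        = pri k * ∏ i, CrowdDS.condLaw q p i j k (h i))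
    (f : Fin M → Fin L → Fin (L + 1) → ℝ) (hf0 : ∀ i k k', f i k 0 = f i k' 0)
    (a : Fin L → ℝ) (j : Fin N) (k l : Fin L) (hkl : k ≠ l)
    (hnb : 0 < nbar f) (ht : 0 ≤ tauMin f a q p j)
    (hd : 0 < sigmaSq f q p + cConst f * tauMin f a q p j / 3) :
    (μ {ω | y j ω = k ∧
        (∑ i, f i k (Z i j ω)) + a k ≤ (∑ i, f i l (Z i j ω)) + a l}).toReal
      ≤ pri k * Real.exp (-(tauMin f a q p j) ^ 2 /
          (2 * (sigmaSq f q p + cConst f * tauMin f a q p j / 3))) := by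
  set t := tauMin f a q p j with htd
  set σ := sigmaSq f q p with hσd
  set c := cConst f with hcd
  set d := σ + c * t / 3 with hdd
  set lam := t / (nbar f * d) with hlamd
  have hlam : 0 ≤ lam := div_nonneg ht (by positivity)
  have hB : 0 < BB f := BB_pos hL f hnb
  have hch := chernoff μ y Z hym hZm pri q p hpri hq0 hq1 hp0 hlaw f a j k l lam hlam
  have hcln : ∀ i x, 0 ≤ condLaw q p i j k x :=
    fun i x => cl_nonneg q p hq0 hq1 hp0 i j k x
  have hvb : ∀ i x, |f i l x - f i k x| ≤ BB f := by
    intro i x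
    refine Fin.cases ?_ ?_ x
    · rw [hf0 i l k]; simpa using hB.le
    · intro h; exact le_BB f i h hkl.symm
  set G := Real.exp (lam * BB f) - 1 - lam * BB f with hGd
  have hfac : ∀ i, ∑ x, condLaw q p i j k x * Real.exp (lam * (f i l x - f i k x))
      ≤ Real.exp (lam * (∑ x, condLaw q p i j k x * (f i l x - f i k x))
          + (∑ x, condLaw q p i j k x * (f i l x - f i k x) ^ 2) * G / BB f ^ 2) :=
    fun i => bernstein_factor _ _ (hcln i) (cl_sum q p hp1 i j k) (BB f) hB (hvb i) lam hlam
  have hprod : (∏ i, ∑ x, condLaw q p i j k x * Real.exp (lam * (f i l x - f i k x)))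
      ≤ Real.exp (∑ i, (lam * (∑ x, condLaw q p i j k x * (f i l x - f i k x))
          + (∑ x, condLaw q p i j k x * (f i l x - f i k x) ^ 2) * G / BB f ^ 2)) := by
    rw [Real.exp_sum]
    exact Finset.prod_le_prod (fun i _ => Finset.sum_nonneg fun x _ =>
      mul_nonneg (hcln i x) (Real.exp_pos _).le) (fun i _ => hfac i)
  set SM := ∑ i, ∑ h : Fin L, q i j * p i k h * (f i l h.succ - f i k h.succ) with hSM
  set SQ := ∑ i, ∑ h : Fin L, q i j * p i k h * (f i l h.succ - f i k h.succ) ^ 2 with hSQ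
  have hm : ∀ i, ∑ x, condLaw q p i j k x * (f i l x - f i k x)
      = ∑ h : Fin L, q i j * p i k h * (f i l h.succ - f i k h.succ) := fun i =>
    cl_moment q p i j k _ (by rw [hf0 i l k]; ring)
  have hm2 : ∀ i, ∑ x, condLaw q p i j k x * (f i l x - f i k x) ^ 2
      = ∑ h : Fin L, q i j * p i k h * (f i l h.succ - f i k h.succ) ^ 2 := fun i =>
    cl_moment q p i j k _ (by rw [hf0 i l k]; ring)
  have hexp : ∑ i, (lam * (∑ x, condLaw q p i j k x * (f i l x - f i k x))
      + (∑ x, condLaw q p i j k x * (f i l x - f i k x) ^ 2) * G / BB f ^ 2)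
      = lam * SM + SQ * G / BB f ^ 2 := by
    rw [Finset.sum_add_distrib, hSM, hSQ]
    congr 1
    · rw [← Finset.mul_sum]
      congr 1
      exact Finset.sum_congr rfl fun i _ => hm i
    · rw [Finset.sum_mul, Finset.sum_div]
      exact Finset.sum_congr rfl fun i _ => by rw [hm2 i]
  rw [hexp] at hprod
  -- bound SQ by sigma
  have hSQle : SQ ≤ σ * nbar f ^ 2 := by
    have h1 := sigma_ge f q p j hkl hnb
    rw [← hσd] at h1
    refine le_trans (le_of_eq ?_) h1
    rw [hSQ]
    apply Finset.sum_congr rfl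
    intro i _
    apply Finset.sum_congr rfl
    intro h _
    ring
  have hG0 : 0 ≤ G := by
    have := Real.add_one_le_exp (lam * BB f)
    rw [hGd]; linarith
  have hgap := gap_id f a q p j k l
  have hgap2 : t * nbar f ≤ gap f a q p j k l := by
    have := tauMin_le f a q p j hkl
    rw [← htd] at this
    exact (le_div_iff₀ hnb).mp this
  have hσ0 : 0 ≤ σ := by
    rw [hσd]; exact sigmaSq_nonneg hL hN f q p hq0 hp0
  have e1 : lam * (nbar f * d) = t := by
    rw [hlamd]; field_simp
  -- variance term bound
  have hvt : SQ * G / BB f ^ 2 ≤ t ^ 2 / (2 * d) := by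
    have hBB2 : (0:ℝ) < BB f ^ 2 := pow_pos hB 2
    have hstep : SQ * G / BB f ^ 2 ≤ σ * nbar f ^ 2 * G / BB f ^ 2 :=
      div_le_div_of_nonneg_right (mul_le_mul_of_nonneg_right hSQle hG0) hBB2.le
    refine le_trans hstep ?_
    rcases eq_or_lt_of_le hσ0 with hσe | hσp
    · have hSQ0 : σ = 0 := hσe.symm
      rw [hSQ0]
      have h0 : (0:ℝ) * nbar f ^ 2 * G / BB f ^ 2 = 0 := by ring
      rw [h0]
      positivity
    · have hu0 : 0 ≤ lam * BB f := mul_nonneg hlam hB.le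
      have hcB : c * nbar f = BB f := by
        rw [hcd, cConst_eq]; field_simp
      have hu : lam * BB f = t * c / d := by
        rw [hlamd, ← hcB]; field_simp
      have h13 : (1 - lam * BB f / 3) * d = σ := by
        rw [hu]
        have hdne : d ≠ 0 := ne_of_gt hd
        field_simp [hdne]
        rw [hdd]
        ring
      have hben := bennett_ineq (lam * BB f) hu0
      have hGle : σ * G ≤ (lam * BB f) ^ 2 / 2 * d := by
        have h14 := mul_le_mul_of_nonneg_right hben hd.le
        calc σ * G = ((1 - lam * BB f / 3) * d) * G := by rw [h13]
        _ = (1 - lam * BB f / 3) * (Real.exp (lam * BB f) - 1 - lam * BB f) * d := by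
            rw [hGd]; ring
        _ ≤ (lam * BB f) ^ 2 / 2 * d := h14
      calc σ * nbar f ^ 2 * G / BB f ^ 2
          = (σ * G) * (nbar f ^ 2 / BB f ^ 2) := by ring
      _ ≤ ((lam * BB f) ^ 2 / 2 * d) * (nbar f ^ 2 / BB f ^ 2) := by
          apply mul_le_mul_of_nonneg_right hGle (by positivity)
      _ = t ^ 2 / (2 * d) := by
          rw [← e1]
          field_simp
  have hE : lam * (a l - a k) + (lam * SM + SQ * G / BB f ^ 2)
      ≤ -t ^ 2 / (2 * d) := by
    have h6 : lam * (a l - a k) + lam * SM = -(lam * gap f a q p j k l) := by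
      rw [← mul_add, hgap]; ring
    have h4 : lam * (t * nbar f) ≤ lam * gap f a q p j k l :=
      mul_le_mul_of_nonneg_left hgap2 hlam
    have h5 : lam * (t * nbar f) = t ^ 2 / d := by
      rw [hlamd]; field_simp
    have h7 : t ^ 2 / d = 2 * (t ^ 2 / (2 * d)) := by
      field_simp
    rw [neg_div]
    linarith
  calc (μ {ω | y j ω = k ∧
        (∑ i, f i k (Z i j ω)) + a k ≤ (∑ i, f i l (Z i j ω)) + a l}).toReal
      ≤ pri k * Real.exp (lam * (a l - a k)) *
          ∏ i, ∑ x, condLaw q p i j k x * Real.exp (lam * (f i l x - f i k x)) := hch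
  _ ≤ pri k * Real.exp (lam * (a l - a k)) *
        Real.exp (lam * SM + SQ * G / BB f ^ 2) := by
      apply mul_le_mul_of_nonneg_left hprod
      exact mul_nonneg (hpri k) (Real.exp_pos _).le
  _ = pri k * Real.exp (lam * (a l - a k) + (lam * SM + SQ * G / BB f ^ 2)) := by
      simp only [Real.exp_add]; ring
  _ ≤ pri k * Real.exp (-t ^ 2 / (2 * d)) :=
      mul_le_mul_of_nonneg_left (Real.exp_le_exp.mpr hE) (hpri k)

end KL

end Part2
section Final
open CrowdDS CrowdAux

variable {Ω : Type*} [MeasurableSpace Ω] {M N L : ℕ}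

lemma tauMin_zero (hL : 2 ≤ L) (f : Fin M → Fin L → Fin (L + 1) → ℝ) (a : Fin L → ℝ)
    (q : Fin M → Fin N → ℝ) (p : Fin M → Fin L → Fin L → ℝ) (j : Fin N)
    (hnb : nbar f = 0) : tauMin f a q p j = 0 := by
  have hset : {x : ℝ | ∃ k l : Fin L, k ≠ l ∧ x = gap f a q p j k l / nbar f}
      = {(0 : ℝ)} := by
    ext x
    simp only [Set.mem_setOf_eq, Set.mem_singleton_iff]
    constructor
    · rintro ⟨k, l, hkl, rfl⟩
      rw [hnb, div_zero]
    · rintro rfl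
      obtain ⟨k, l, hkl⟩ := kl_ex (L := L) hL
      exact ⟨k, l, hkl, by rw [hnb, div_zero]⟩
  rw [tauMin, hset, csInf_singleton]

end Final

end AuxProofs

/-- Under the general Dawid–Skene model with a decomposable aggregation
rule: for every item `j`, if `τ_j^min ≥ 0`, then
`P(ŷ_j ≠ y_j) ≤ (L−1)·min{exp(−(τ_j^min)²/2), exp(−(τ_j^min)²/(2(σ² + c·τ_j^min/3)))}`. -/
theorem item_error_prob_upper_bound
    {Ω : Type*} [MeasurableSpace Ω] (μ : Measure Ω) [IsProbabilityMeasure μ]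
    {M N L : ℕ} (hM : 0 < M) (hN : 0 < N) (hL : 2 ≤ L)
    (y : Fin N → Ω → Fin L) (Z : Fin M → Fin N → Ω → Fin (L + 1))
    (hym : ∀ j, Measurable (y j)) (hZm : ∀ i j, Measurable (Z i j))
    (pri : Fin L → ℝ) (q : Fin M → Fin N → ℝ) (p : Fin M → Fin L → Fin L → ℝ)
    (hpri : ∀ k, 0 ≤ pri k) (hq0 : ∀ i j, 0 ≤ q i j) (hq1 : ∀ i j, q i j ≤ 1)
    (hp0 : ∀ i k h, 0 ≤ p i k h) (hp1 : ∀ i k, ∑ h, p i k h = 1)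
    (hprior : ∀ (j : Fin N) (k : Fin L), (μ {ω | y j ω = k}).toReal = pri k)
    (hlaw : ∀ (j : Fin N) (k : Fin L) (h : Fin M → Fin (L + 1)),
      (μ {ω | y j ω = k ∧ ∀ i, Z i j ω = h i}).toReal
        = pri k * ∏ i, CrowdDS.condLaw q p i j k (h i))
    (hindep : iIndepFun (fun j ω => (y j ω, fun i => Z i j ω)) μ)
    (f : Fin M → Fin L → Fin (L + 1) → ℝ) (hf0 : ∀ i k k', f i k 0 = f i k' 0)
    (a : Fin L → ℝ)
    (yhat : Fin N → Ω → Fin L) (hyhatm : ∀ j, Measurable (yhat j))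
    (hyhat : ∀ (j : Fin N) (ω : Ω) (k : Fin L),
      (∑ i, f i k (Z i j ω)) + a k ≤ (∑ i, f i (yhat j ω) (Z i j ω)) + a (yhat j ω))
    (j : Fin N) (ht : 0 ≤ CrowdDS.tauMin f a q p j) :
    (μ {ω | yhat j ω ≠ y j ω}).toReal
      ≤ ((L : ℝ) - 1) * min
          (Real.exp (-(CrowdDS.tauMin f a q p j) ^ 2 / 2))
          (Real.exp (-(CrowdDS.tauMin f a q p j) ^ 2 /
            (2 * (CrowdDS.sigmaSq f q p
              + CrowdDS.cConst f * CrowdDS.tauMin f a q p j / 3)))) := by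
  classical
  set t := CrowdDS.tauMin f a q p j with htd
  have hL1 : (1 : ℝ) ≤ (L : ℝ) - 1 := by
    have : (2 : ℝ) ≤ (L : ℝ) := by exact_mod_cast hL
    linarith
  have hle1 : (μ {ω | yhat j ω ≠ y j ω}).toReal ≤ 1 := by
    have h := ENNReal.toReal_mono (measure_ne_top μ Set.univ)
      (measure_mono (Set.subset_univ {ω | yhat j ω ≠ y j ω}))
    rwa [measure_univ, ENNReal.toReal_one] at h
  rcases eq_or_lt_of_le (Real.sqrt_nonneg _ : (0 : ℝ) ≤ CrowdDS.nbar f) with hnb0 | hnb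
  · -- degenerate case `N̄ = 0`
    have ht0 : t = 0 := by rw [htd]; exact tauMin_zero hL f a q p j hnb0.symm
    rw [ht0]
    have e1 : Real.exp (-(0 : ℝ) ^ 2 / 2) = 1 := by norm_num
    have e2 : Real.exp (-(0 : ℝ) ^ 2 /
        (2 * (CrowdDS.sigmaSq f q p + CrowdDS.cConst f * 0 / 3))) = 1 := by
      norm_num
    rw [e1, e2, min_self, mul_one]
    linarith
  · -- main case `N̄ > 0`
    set A := Real.exp (-t ^ 2 / 2) with hA
    set Bx := Real.exp (-t ^ 2 /
      (2 * (CrowdDS.sigmaSq f q p + CrowdDS.cConst f * t / 3))) with hBx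
    set E : Fin L → Fin L → Set Ω := fun k l => {ω | y j ω = k ∧
      (∑ i, f i k (Z i j ω)) + a k ≤ (∑ i, f i l (Z i j ω)) + a l} with hE
    have hsub : {ω | yhat j ω ≠ y j ω}
        ⊆ ⋃ k ∈ (Finset.univ : Finset (Fin L)), ⋃ l ∈ Finset.univ.erase k, E k l := by
      intro ω hω
      have hωne : yhat j ω ≠ y j ω := hω
      simp only [Set.mem_iUnion]
      exact ⟨y j ω, Finset.mem_univ _, yhat j ω,
        Finset.mem_erase.mpr ⟨hωne, Finset.mem_univ _⟩, rfl, hyhat j ω (y j ω)⟩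
    have hkey : ∀ k l, l ≠ k → (μ (E k l)).toReal ≤ pri k * min A Bx := by
      intro k l hlk
      have hkl : k ≠ l := hlk.symm
      rw [mul_min_of_nonneg _ _ (hpri k)]
      apply le_min
      · exact hoeff_kl μ hL y Z hym hZm pri q p hpri hq0 hq1 hp0 hp1 hlaw
          f hf0 a j k l hkl hnb ht
      · by_cases hd : 0 < CrowdDS.sigmaSq f q p + CrowdDS.cConst f * t / 3
        · exact bern_kl μ hL hN y Z hym hZm pri q p hpri hq0 hq1 hp0 hp1 hlaw
            f hf0 a j k l hkl hnb ht hd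
        · have hd0 : CrowdDS.sigmaSq f q p + CrowdDS.cConst f * t / 3 = 0 := by
            have h1 : 0 ≤ CrowdDS.sigmaSq f q p := sigmaSq_nonneg hL hN f q p hq0 hp0
            have h2 : 0 ≤ CrowdDS.cConst f := cConst_nonneg hL hM f
            have h3 : 0 ≤ CrowdDS.cConst f * t / 3 := by positivity
            push_neg at hd
            linarith
          have hBx1 : Bx = 1 := by
            rw [hBx, hd0]
            norm_num
          rw [hBx1, mul_one]
          have hsubk : E k l ⊆ {ω | y j ω = k} := fun ω hω => hω.1
          calc (μ (E k l)).toReal ≤ (μ {ω | y j ω = k}).toReal :=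
              ENNReal.toReal_mono (measure_ne_top μ _) (measure_mono hsubk)
          _ = pri k := hprior j k
    have hprisum : ∑ k, pri k = 1 := by
      have hun : (⋃ k ∈ (Finset.univ : Finset (Fin L)), {ω | y j ω = k}) = Set.univ := by
        ext ω; simp
      have hdisj : (↑(Finset.univ : Finset (Fin L)) : Set (Fin L)).PairwiseDisjoint
          (fun k => {ω | y j ω = k}) := by
        intro k1 _ k2 _ hne
        rw [Function.onFun, Set.disjoint_left]
        rintro ω h1 h2
        exact hne ((h1 : y j ω = k1).symm.trans h2)
      have hb := measure_biUnion_finset (μ := μ) hdisj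
        (fun k _ => (hym j) (measurableSet_singleton k))
      rw [hun, measure_univ] at hb
      calc ∑ k, pri k = ∑ k, (μ {ω | y j ω = k}).toReal :=
            Finset.sum_congr rfl fun k _ => (hprior j k).symm
      _ = (∑ k, μ {ω | y j ω = k}).toReal :=
            (ENNReal.toReal_sum fun k _ => measure_ne_top μ _).symm
      _ = ENNReal.toReal 1 := by rw [← hb]
      _ = 1 := by simp
    have h1 : (μ {ω | yhat j ω ≠ y j ω}).toReal
        ≤ ∑ k, ∑ l ∈ Finset.univ.erase k, (μ (E k l)).toReal := by
      have hm1 : μ {ω | yhat j ω ≠ y j ω}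
          ≤ ∑ k, ∑ l ∈ Finset.univ.erase k, μ (E k l) :=
        le_trans (measure_mono hsub) (le_trans (measure_biUnion_finset_le _ _)
          (Finset.sum_le_sum fun k _ => measure_biUnion_finset_le _ _))
      have hnt : (∑ k, ∑ l ∈ Finset.univ.erase k, μ (E k l)) ≠ ⊤ := by
        refine ENNReal.sum_ne_top.mpr fun k _ => ?_
        exact ENNReal.sum_ne_top.mpr fun l _ => measure_ne_top μ _
      refine le_trans (ENNReal.toReal_mono hnt hm1) (le_of_eq ?_)
      rw [ENNReal.toReal_sum (fun k _ => ENNReal.sum_ne_top.mpr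
        fun l _ => measure_ne_top μ _)]
      exact Finset.sum_congr rfl fun k _ =>
        ENNReal.toReal_sum fun l _ => measure_ne_top μ _
    have hmin0 : 0 ≤ min A Bx := le_min (Real.exp_pos _).le (Real.exp_pos _).le
    have h2 : ∑ k, ∑ l ∈ Finset.univ.erase k, (μ (E k l)).toReal
        ≤ ∑ k, ((L : ℝ) - 1) * (pri k * min A Bx) := by
      apply Finset.sum_le_sum
      intro k _
      calc ∑ l ∈ Finset.univ.erase k, (μ (E k l)).toReal
          ≤ ∑ l ∈ Finset.univ.erase k, pri k * min A Bx :=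
            Finset.sum_le_sum fun l hl => hkey k l (Finset.mem_erase.mp hl).1
      _ = ((Finset.univ.erase k).card : ℝ) * (pri k * min A Bx) := by
            rw [Finset.sum_const, nsmul_eq_mul]
      _ = ((L : ℝ) - 1) * (pri k * min A Bx) := by
            rw [Finset.card_erase_of_mem (Finset.mem_univ k), Finset.card_univ,
              Fintype.card_fin]
            congr 1
            have h1L : 1 ≤ L := by omega
            push_cast [Nat.cast_sub h1L]
            ring
    have h3 : ∑ k, ((L : ℝ) - 1) * (pri k * min A Bx)
        = ((L : ℝ) - 1) * min A Bx := by
      have : ∀ k, ((L : ℝ) - 1) * (pri k * min A Bx)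
          = ((L : ℝ) - 1) * min A Bx * pri k := fun k => by ring
      rw [Finset.sum_congr rfl fun k _ => this k, ← Finset.mul_sum, hprisum, mul_one]
    calc (μ {ω | yhat j ω ≠ y j ω}).toReal
        ≤ ∑ k, ∑ l ∈ Finset.univ.erase k, (μ (E k l)).toReal := h1
    _ ≤ ∑ k, ((L : ℝ) - 1) * (pri k * min A Bx) := h2
    _ = ((L : ℝ) - 1) * min A Bx := h3
end
end

section
/- Under the Dawid–Skene model with a decomposable aggregation rule: for every item j, if τ_j^max ≤ 0, then P(ŷ_j ≠ y_j) ≥ 1 − min{ exp(−(τ_j^max)²/2), exp(−(τ_j^max)²/(2·(σ² − c·τ_j^max/3))) }. -/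
open MeasureTheory ProbabilityTheory Real Finset
open scoped ENNReal


namespace DSAux

open Real Finset Nat

lemma E1 {x : ℝ} (hx : x ≤ 0) : Real.exp x ≤ 1 + x + x^2/2 := by
  have hd : ∀ t : ℝ, HasDerivAt (fun s => 1 - s + s^2/2 - Real.exp (-s)) (-1 + t + Real.exp (-t)) t := by
    intro t
    have h1 : HasDerivAt (fun s : ℝ => Real.exp (-s)) (-Real.exp (-t)) t := by
      simpa [Function.comp_def] using (Real.hasDerivAt_exp (-t)).comp t (hasDerivAt_neg t)
    have h2 : HasDerivAt (fun s : ℝ => 1 - s + s^2/2) (-1 + t) t := by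
      have := ((hasDerivAt_id t).const_sub 1).add (((hasDerivAt_pow 2 t)).div_const 2)
      simpa [pow_one, Pi.add_def] using this
    simpa [sub_eq_add_neg, Pi.add_def, Pi.neg_def] using h2.add h1.neg
  set y : ℝ := -x with hy
  have hy0 : 0 ≤ y := by simp [hy]; linarith
  have hmono : MonotoneOn (fun s => 1 - s + s^2/2 - Real.exp (-s)) (Set.Icc 0 y) := by
    apply monotoneOn_of_deriv_nonneg (convex_Icc 0 y)
    · exact Continuous.continuousOn (by continuity)
    · exact fun t _ => (hd t).differentiableAt.differentiableWithinAt
    · intro t ht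
      rw [(hd t).deriv]
      nlinarith [Real.add_one_le_exp (-t)]
  have := hmono (Set.left_mem_Icc.2 hy0) (Set.right_mem_Icc.2 hy0) hy0
  norm_num at this
  have hxy : x = -y := by simp [hy]
  rw [hxy]
  nlinarith [this]


lemma fact_ge (n : ℕ) : 2 * 3 ^ n ≤ Nat.factorial (n + 2) := by
  induction n with
  | zero => simp [Nat.factorial]
  | succ m ih =>
      have h : Nat.factorial (m + 3) = (m + 3) * Nat.factorial (m + 2) := rfl
      have h1 : 1 ≤ Nat.factorial (m + 2) := Nat.one_le_iff_ne_zero.2 (Nat.factorial_ne_zero _)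
      calc 2 * 3 ^ (m + 1) = 3 * (2 * 3 ^ m) := by ring
        _ ≤ 3 * Nat.factorial (m + 2) := by omega
        _ ≤ (m + 3) * Nat.factorial (m + 2) := Nat.mul_le_mul_right _ (by omega)
        _ = Nat.factorial (m + 3) := h.symm

lemma E2 {x : ℝ} (hx : 0 ≤ x) (hx3 : x < 3) :
    Real.exp x ≤ 1 + x + x^2 / (2 * (1 - x/3)) := by
  have hsum : Summable (fun n : ℕ => x ^ n / n !) := Real.summable_pow_div_factorial x
  have hexp : Real.exp x = ∑' n : ℕ, x ^ n / n ! := by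
    rw [Real.exp_eq_exp_ℝ, NormedSpace.exp_eq_tsum_div]
  have hsum1 : Summable (fun n : ℕ => x ^ (n+1) / (n+1)!) :=
    hsum.comp_injective (add_left_injective 1)
  have hsum2 : Summable (fun n : ℕ => x ^ (n+2) / (n+2)!) :=
    hsum.comp_injective (add_left_injective 2)
  have h0 : (∑' n : ℕ, x ^ n / n !) = 1 + (x + ∑' n : ℕ, x ^ (n + 2) / (n + 2)!) := by
    rw [Summable.tsum_eq_zero_add hsum, Summable.tsum_eq_zero_add hsum1]
    norm_num [Nat.factorial]
  have hgeom : (∑' n : ℕ, (x/3) ^ n) = (1 - x/3)⁻¹ :=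
    tsum_geometric_of_lt_one (by linarith) (by linarith)
  have hterm : ∀ n : ℕ, x ^ (n + 2) / (n + 2)! ≤ x^2/2 * (x/3)^n := by
    intro n
    have h1 : (2 * 3 ^ n : ℝ) ≤ (n + 2)! := by exact_mod_cast fact_ge n
    have heq : x^2/2 * (x/3)^n = x^(n+2) / (2 * 3^n) := by
      rw [div_pow, pow_add]; field_simp
    rw [heq]
    gcongr
  have hgsum : Summable (fun n : ℕ => x^2/2 * (x/3)^n) :=
    (summable_geometric_of_lt_one (by positivity) (by rw [div_lt_one]; linarith; norm_num)).mul_left _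
  have htail : (∑' n : ℕ, x ^ (n + 2) / (n + 2)!) ≤ x^2/2 * (1 - x/3)⁻¹ := by
    calc (∑' n : ℕ, x ^ (n + 2) / (n + 2)!) ≤ ∑' n : ℕ, x^2/2 * (x/3)^n :=
          Summable.tsum_le_tsum hterm hsum2 hgsum
      _ = x^2/2 * (1 - x/3)⁻¹ := by rw [tsum_mul_left, hgeom]
  have hpos : (0:ℝ) < 1 - x/3 := by linarith
  have hfin : x^2/2 * (1 - x/3)⁻¹ = x^2 / (2 * (1 - x/3)) := by
    field_simp
  rw [hexp, h0]
  linarith [htail, hfin.symm.le, hfin.le]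


lemma Hscal {p : ℝ} (h0 : 0 ≤ p) (h1 : p ≤ 1) (u : ℝ) :
    (1-p)*Real.exp (-(p*u)) + p*Real.exp ((1-p)*u) ≤ Real.exp (u^2/8) := by
  set D : ℝ → ℝ := fun t => 1 - p + p * Real.exp t with hDdef
  have hD : ∀ t, 0 < D t := by
    intro t
    rcases eq_or_lt_of_le h1 with rfl | h
    · simpa [hDdef] using Real.exp_pos t
    · have := mul_nonneg h0 (Real.exp_pos t).le
      simp only [hDdef]; linarith
  have hDd : ∀ t, HasDerivAt D (p * Real.exp t) t := by
    intro t
    exact ((Real.hasDerivAt_exp t).const_mul p).const_add (1 - p)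
  -- g = derivative of ψ where ψ t = t^2/8 - (log (D t) - p t)
  set g : ℝ → ℝ := fun t => t/4 - p * Real.exp t / D t + p with hgdef
  have hg0 : g 0 = 0 := by simp [hgdef, hDdef]
  have hgd : ∀ t, HasDerivAt g (1/4 - p * Real.exp t * (1 - p) / (D t)^2) t := by
    intro t
    have hq : HasDerivAt (fun s => p * Real.exp s / D s)
        ((p * Real.exp t * D t - p * Real.exp t * (p * Real.exp t)) / (D t)^2) t :=
      ((Real.hasDerivAt_exp t).const_mul p).div (hDd t) (hD t).ne'
    have h4 : HasDerivAt (fun s : ℝ => s/4) (1/4) t := (hasDerivAt_id t).div_const 4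
    have := (h4.sub hq).add_const p
    refine this.congr_deriv ?_
    rw [show D t = 1 - p + p * Real.exp t from rfl]
    ring
  have hgd' : ∀ t, 0 ≤ 1/4 - p * Real.exp t * (1 - p) / (D t)^2 := by
    intro t
    rw [sub_nonneg, div_le_iff₀ (pow_pos (hD t) 2)]
    have h := sq_nonneg ((1-p) - p * Real.exp t)
    have hDt : D t = (1-p) + p * Real.exp t := rfl
    rw [hDt]
    nlinarith
  have hgmono : Monotone g :=
    monotone_of_deriv_nonneg (fun t => (hgd t).differentiableAt)
      (fun t => by rw [(hgd t).deriv]; exact hgd' t)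
  have hgsign : ∀ t, 0 ≤ t → 0 ≤ g t := fun t ht => hg0 ▸ hgmono ht
  have hgsign' : ∀ t, t ≤ 0 → g t ≤ 0 := fun t ht => hg0 ▸ hgmono ht
  -- ψ
  set ψ : ℝ → ℝ := fun t => t^2/8 - (Real.log (D t) - p * t) with hψdef
  have hψ0 : ψ 0 = 0 := by simp [hψdef, hDdef]
  have hψd : ∀ t, HasDerivAt ψ (g t) t := by
    intro t
    have hlog : HasDerivAt (fun s => Real.log (D s)) (p * Real.exp t / D t) t :=
      (hDd t).log (hD t).ne'
    have hpt : HasDerivAt (fun s : ℝ => p * s) p t := by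
      simpa using (hasDerivAt_id t).const_mul p
    have h8 : HasDerivAt (fun s : ℝ => s^2/8) (t/4) t := by
      have := (hasDerivAt_pow 2 t).div_const 8
      simpa [pow_one] using this.congr_deriv (by ring)
    have H := h8.sub (hlog.sub hpt)
    have heq : t/4 - (p * Real.exp t / D t - p) = g t := by simp only [hgdef]; ring
    exact heq ▸ H
  have hψnonneg : 0 ≤ ψ u := by
    rcases le_or_gt 0 u with hu | hu
    · have hmono : MonotoneOn ψ (Set.Icc 0 u) := by
        apply monotoneOn_of_deriv_nonneg (convex_Icc 0 u)
        · exact fun t ht => (hψd t).differentiableAt.continuousAt.continuousWithinAt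
        · exact fun t ht => (hψd t).differentiableAt.differentiableWithinAt
        · intro t ht
          rw [interior_Icc] at ht
          rw [(hψd t).deriv]
          exact hgsign t ht.1.le
      have := hmono (Set.left_mem_Icc.2 hu) (Set.right_mem_Icc.2 hu) hu
      linarith [hψ0 ▸ this]
    · have hmono : AntitoneOn ψ (Set.Icc u 0) := by
        apply antitoneOn_of_deriv_nonpos (convex_Icc u 0)
        · exact fun t ht => (hψd t).differentiableAt.continuousAt.continuousWithinAt
        · exact fun t ht => (hψd t).differentiableAt.differentiableWithinAt
        · intro t ht
          rw [interior_Icc] at ht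
          rw [(hψd t).deriv]
          exact hgsign' t ht.2.le
      have := hmono (Set.left_mem_Icc.2 hu.le) (Set.right_mem_Icc.2 hu.le) hu.le
      linarith [hψ0 ▸ this]
  -- conclude
  have hLHS : (1-p)*Real.exp (-(p*u)) + p*Real.exp ((1-p)*u) = Real.exp (-(p*u)) * D u := by
    rw [show (1-p)*u = -(p*u) + u by ring, Real.exp_add]
    simp only [hDdef]
    ring
  rw [hLHS]
  have : Real.exp (-(p*u)) * D u = Real.exp (Real.log (D u) - p * u) := by
    rw [Real.exp_sub, Real.exp_log (hD u), Real.exp_neg]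
    ring
  rw [this]
  apply Real.exp_le_exp.2
  have := hψnonneg
  simp only [hψdef] at this
  linarith

lemma Eboth {x u : ℝ} (hx : x ≤ u) (hu0 : 0 ≤ u) (hu : u < 3) :
    Real.exp x ≤ 1 + x + x^2/(2*(1 - u/3)) := by
  have hK : (0:ℝ) < 1 - u/3 := by linarith
  rcases le_or_gt x 0 with h | h
  · have := E1 h
    have h2 : x^2/2 ≤ x^2/(2*(1-u/3)) := by
      apply div_le_div_of_nonneg_left (sq_nonneg x) (by linarith)
      nlinarith
    linarith
  · have := E2 h.le (lt_of_le_of_lt hx hu)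
    have h2 : x^2/(2*(1-x/3)) ≤ x^2/(2*(1-u/3)) := by
      apply div_le_div_of_nonneg_left (sq_nonneg x) (by linarith)
      linarith
    linarith

lemma mgfA {ι : Type*} [Fintype ι] (w g : ι → ℝ) (hw0 : ∀ h, 0 ≤ w h)
    (hw1 : ∑ h, w h = 1) (d lam : ℝ) (hg : ∀ h, |g h| ≤ d) :
    ∑ h, w h * Real.exp (lam * g h)
      ≤ Real.exp (lam * (∑ h, w h * g h) + lam^2 * d^2 / 2) := by
  rcases isEmpty_or_nonempty ι with hι | hι
  · simp at hw1
  have hd0 : 0 ≤ d := le_trans (abs_nonneg _) (hg (Classical.arbitrary ι))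
  set m : ℝ := ∑ h, w h * g h with hm
  have hmb : |m| ≤ d := by
    calc |m| ≤ ∑ h, |w h * g h| := Finset.abs_sum_le_sum_abs _ _
      _ ≤ ∑ h, w h * d := by
          apply Finset.sum_le_sum
          intro h _
          rw [abs_mul, abs_of_nonneg (hw0 h)]
          exact mul_le_mul_of_nonneg_left (hg h) (hw0 h)
      _ = d := by rw [← Finset.sum_mul, hw1, one_mul]
  rcases eq_or_lt_of_le hd0 with hd | hd
  · -- d = 0 : all g = 0
    have hg0 : ∀ h, g h = 0 := fun h => abs_nonpos_iff.1 (hd ▸ hg h)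
    have : ∀ h ∈ univ, w h * Real.exp (lam * g h) = w h := fun h _ => by simp [hg0 h]
    rw [Finset.sum_congr rfl this, hw1]
    have : m = 0 := by rw [hm]; apply Finset.sum_eq_zero; intro h _; simp [hg0 h]
    rw [this, ← hd]
    norm_num
  · set EA := Real.exp (-(lam * d)) with hEA
    set EB := Real.exp (lam * d) with hEB
    have hchord : ∀ h : ι, Real.exp (lam * g h)
        ≤ ((d - g h) * EA + (g h + d) * EB) / (2*d) := by
      intro h
      have ha : 0 ≤ (d - g h)/(2*d) := by
        apply div_nonneg _ (by linarith)
        have := (abs_le.1 (hg h)).2; linarith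
      have hb : 0 ≤ (g h + d)/(2*d) := by
        apply div_nonneg _ (by linarith)
        have := (abs_le.1 (hg h)).1; linarith
      have hab : (d - g h)/(2*d) + (g h + d)/(2*d) = 1 := by
        field_simp
        ring
      have := convexOn_exp.2 (Set.mem_univ (-(lam*d))) (Set.mem_univ (lam*d)) ha hb hab
      simp only [smul_eq_mul] at this
      have harg : (d - g h)/(2*d) * (-(lam*d)) + (g h + d)/(2*d) * (lam*d) = lam * g h := by
        field_simp
        ring
      rw [harg] at this
      calc Real.exp (lam * g h) ≤ (d - g h)/(2*d) * EA + (g h + d)/(2*d) * EB := this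
        _ = ((d - g h) * EA + (g h + d) * EB) / (2*d) := by ring
    have hsum : ∑ h, w h * Real.exp (lam * g h)
        ≤ ((d - m) * EA + (m + d) * EB) / (2*d) := by
      calc ∑ h, w h * Real.exp (lam * g h)
          ≤ ∑ h, w h * (((d - g h) * EA + (g h + d) * EB) / (2*d)) :=
            Finset.sum_le_sum (fun h _ => mul_le_mul_of_nonneg_left (hchord h) (hw0 h))
        _ = ((d - m) * EA + (m + d) * EB) / (2*d) := by
            have hdiv : ∀ h ∈ univ, w h * (((d - g h) * EA + (g h + d) * EB) / (2*d))
                = (w h * ((d - g h) * EA + (g h + d) * EB)) / (2*d) :=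
              fun h _ => (mul_div_assoc _ _ _).symm
            rw [Finset.sum_congr rfl hdiv, ← Finset.sum_div]
            congr 1
            have : ∀ h ∈ univ, w h * ((d - g h) * EA + (g h + d) * EB)
                = (EA*d + EB*d) * w h + (EB - EA) * (w h * g h) := fun h _ => by ring
            rw [Finset.sum_congr rfl this, Finset.sum_add_distrib, ← Finset.mul_sum,
              ← Finset.mul_sum, hw1, ← hm]
            ring
    set p : ℝ := (m + d)/(2*d) with hp
    set u : ℝ := 2 * lam * d with hu
    have hp0 : 0 ≤ p := by
      apply div_nonneg _ (by linarith)
      have := (abs_le.1 hmb).1; linarith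
    have hp1 : p ≤ 1 := by
      rw [hp, div_le_one (by linarith)]
      have := (abs_le.1 hmb).2; linarith
    have hH := Hscal hp0 hp1 u
    have e1 : Real.exp (lam * m) * Real.exp (-(p*u)) = EA := by
      rw [← Real.exp_add, hEA]
      congr 1
      rw [hp, hu]
      field_simp
      ring
    have e2 : Real.exp (lam * m) * Real.exp ((1-p)*u) = EB := by
      rw [← Real.exp_add, hEB]
      congr 1
      rw [hp, hu]
      field_simp
      ring
    have hfrac : ((d - m) * EA + (m + d) * EB) / (2*d)
        = Real.exp (lam * m) * ((1-p)*Real.exp (-(p*u)) + p*Real.exp ((1-p)*u)) := by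
      rw [← e1, ← e2]
      have h1p : 1 - p = (d - m)/(2*d) := by rw [hp]; field_simp; ring
      rw [h1p, hp]
      field_simp
    have hfin : Real.exp (lam * m) * Real.exp (u^2/8)
        = Real.exp (lam * m + lam^2 * d^2/2) := by
      rw [← Real.exp_add]
      congr 1
      rw [hu]
      ring
    calc ∑ h, w h * Real.exp (lam * g h) ≤ ((d - m) * EA + (m + d) * EB) / (2*d) := hsum
      _ = Real.exp (lam * m) * ((1-p)*Real.exp (-(p*u)) + p*Real.exp ((1-p)*u)) := hfrac
      _ ≤ Real.exp (lam * m) * Real.exp (u^2/8) :=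
          mul_le_mul_of_nonneg_left hH (Real.exp_pos _).le
      _ = Real.exp (lam * m + lam^2 * d^2/2) := hfin

lemma mgfB {ι : Type*} [Fintype ι] (w g : ι → ℝ) (hw0 : ∀ h, 0 ≤ w h)
    (hw1 : ∑ h, w h = 1) (C lam : ℝ) (hg : ∀ h, |g h| ≤ C) (hlam : 0 ≤ lam)
    (hu : lam * C < 3) :
    ∑ h, w h * Real.exp (lam * g h)
      ≤ Real.exp (lam * (∑ h, w h * g h)
          + lam^2 * (∑ h, w h * (g h)^2) / (2*(1 - lam*C/3))) := by
  rcases isEmpty_or_nonempty ι with hι | hι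
  · simp at hw1
  have hC0 : 0 ≤ C := le_trans (abs_nonneg _) (hg (Classical.arbitrary ι))
  have hu0 : 0 ≤ lam * C := mul_nonneg hlam hC0
  set K : ℝ := 2*(1 - lam*C/3) with hK
  have hKpos : 0 < K := by rw [hK]; nlinarith
  have hpt : ∀ h : ι, Real.exp (lam * g h) ≤ 1 + lam * g h + (lam * g h)^2 / K := by
    intro h
    have hxle : lam * g h ≤ lam * C :=
      mul_le_mul_of_nonneg_left (le_trans (le_abs_self _) (hg h)) hlam
    exact Eboth hxle hu0 hu
  calc ∑ h, w h * Real.exp (lam * g h)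
      ≤ ∑ h, w h * (1 + lam * g h + (lam * g h)^2 / K) :=
        Finset.sum_le_sum (fun h _ => mul_le_mul_of_nonneg_left (hpt h) (hw0 h))
    _ = 1 + lam * (∑ h, w h * g h) + lam^2 * (∑ h, w h * (g h)^2) / K := by
        have : ∀ h ∈ univ, w h * (1 + lam * g h + (lam * g h)^2 / K)
            = w h + lam * (w h * g h) + (lam^2 / K) * (w h * (g h)^2) := fun h _ => by ring
        rw [Finset.sum_congr rfl this, Finset.sum_add_distrib, Finset.sum_add_distrib,
          ← Finset.mul_sum, ← Finset.mul_sum, hw1]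
        ring
    _ ≤ Real.exp (lam * (∑ h, w h * g h) + lam^2 * (∑ h, w h * (g h)^2) / K) := by
        have := Real.add_one_le_exp (lam * (∑ h, w h * g h) + lam^2 * (∑ h, w h * (g h)^2) / K)
        linarith

end DSAux



noncomputable section

set_option maxHeartbeats 1600000 in
/-- Under the general Dawid–Skene model with a decomposable aggregation
rule: for every item `j`, if `τ_j^max ≤ 0`, then
`P(ŷ_j ≠ y_j) ≥ 1 − min{exp(−(τ_j^max)²/2), exp(−(τ_j^max)²/(2(σ² − c·τ_j^max/3)))}`. -/
theorem item_error_prob_lower_bound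
    {Ω : Type*} [MeasurableSpace Ω] (μ : Measure Ω) [IsProbabilityMeasure μ]
    {M N L : ℕ} (hM : 0 < M) (hN : 0 < N) (hL : 2 ≤ L)
    (y : Fin N → Ω → Fin L) (Z : Fin M → Fin N → Ω → Fin (L + 1))
    (hym : ∀ j, Measurable (y j)) (hZm : ∀ i j, Measurable (Z i j))
    (pri : Fin L → ℝ) (q : Fin M → Fin N → ℝ) (p : Fin M → Fin L → Fin L → ℝ)
    (hpri : ∀ k, 0 ≤ pri k) (hq0 : ∀ i j, 0 ≤ q i j) (hq1 : ∀ i j, q i j ≤ 1)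
    (hp0 : ∀ i k h, 0 ≤ p i k h) (hp1 : ∀ i k, ∑ h, p i k h = 1)
    (hprior : ∀ (j : Fin N) (k : Fin L), (μ {ω | y j ω = k}).toReal = pri k)
    (hlaw : ∀ (j : Fin N) (k : Fin L) (h : Fin M → Fin (L + 1)),
      (μ {ω | y j ω = k ∧ ∀ i, Z i j ω = h i}).toReal
        = pri k * ∏ i, CrowdDS.condLaw q p i j k (h i))
    (hindep : iIndepFun (fun j ω => (y j ω, fun i => Z i j ω)) μ)
    (f : Fin M → Fin L → Fin (L + 1) → ℝ) (hf0 : ∀ i k k', f i k 0 = f i k' 0)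
    (a : Fin L → ℝ)
    (yhat : Fin N → Ω → Fin L) (hyhatm : ∀ j, Measurable (yhat j))
    (hyhat : ∀ (j : Fin N) (ω : Ω) (k : Fin L),
      (∑ i, f i k (Z i j ω)) + a k ≤ (∑ i, f i (yhat j ω) (Z i j ω)) + a (yhat j ω))
    (j : Fin N) (ht : CrowdDS.tauMax f a q p j ≤ 0) :
    1 - min
        (Real.exp (-(CrowdDS.tauMax f a q p j) ^ 2 / 2))
        (Real.exp (-(CrowdDS.tauMax f a q p j) ^ 2 /
          (2 * (CrowdDS.sigmaSq f q p
            - CrowdDS.cConst f * CrowdDS.tauMax f a q p j / 3))))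
      ≤ (μ {ω | yhat j ω ≠ y j ω}).toReal := by
  classical
  rcases lt_or_eq_of_le ht with htau | htau0
  swap
  · -- tauMax = 0 : trivial
    rw [htau0]
    norm_num
  -- main case: tauMax < 0
  -- abbreviations
  have hk0l0 : (⟨0, by omega⟩ : Fin L) ≠ (⟨1, by omega⟩ : Fin L) :=
    Fin.ne_of_val_ne (by norm_num)
  set k0 : Fin L := ⟨0, by omega⟩ with hk0def
  set l0 : Fin L := ⟨1, by omega⟩ with hl0def
  set NB : ℝ := CrowdDS.nbar f with hNBdef
  -- bddAbove facts
  have hbddI : ∀ i : Fin M, BddAbove {x : ℝ | ∃ k l h : Fin L, k ≠ l ∧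
      x = |f i k h.succ - f i l h.succ|} := by
    intro i
    apply Set.Finite.bddAbove
    apply (Set.finite_range (fun t : Fin L × Fin L × Fin L =>
      |f i t.1 t.2.2.succ - f i t.2.1 t.2.2.succ|)).subset
    rintro x ⟨k, l, h, -, rfl⟩
    exact ⟨(k, l, h), rfl⟩
  have hbddC : BddAbove {x : ℝ | ∃ (i : Fin M) (k l h : Fin L), k ≠ l ∧
      x = |f i k h.succ - f i l h.succ|} := by
    apply Set.Finite.bddAbove
    apply (Set.finite_range (fun t : Fin M × Fin L × Fin L × Fin L =>
      |f t.1 t.2.1 t.2.2.2.succ - f t.1 t.2.2.1 t.2.2.2.succ|)).subset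
    rintro x ⟨i, k, l, h, -, rfl⟩
    exact ⟨(i, k, l, h), rfl⟩
  have hbddV : BddAbove {x : ℝ | ∃ (j' : Fin N) (k l : Fin L), k ≠ l ∧
      x = ∑ i, ∑ h : Fin L, q i j' * (f i k h.succ - f i l h.succ) ^ 2 * p i k h} := by
    apply Set.Finite.bddAbove
    apply (Set.finite_range (fun t : Fin N × Fin L × Fin L =>
      ∑ i, ∑ h : Fin L, q i t.1 * (f i t.2.1 h.succ - f i t.2.2 h.succ) ^ 2 * p i t.2.1 h)).subset
    rintro x ⟨j', k, l, -, rfl⟩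
    exact ⟨(j', k, l), rfl⟩
  have hbddT : BddAbove {x : ℝ | ∃ k l : Fin L, k ≠ l ∧
      x = CrowdDS.gap f a q p j k l / NB} := by
    apply Set.Finite.bddAbove
    apply (Set.finite_range (fun t : Fin L × Fin L =>
      CrowdDS.gap f a q p j t.1 t.2 / NB)).subset
    rintro x ⟨k, l, -, rfl⟩
    exact ⟨(k, l), rfl⟩
  set dI : Fin M → ℝ := fun i => sSup {x : ℝ | ∃ k l h : Fin L, k ≠ l ∧
    x = |f i k h.succ - f i l h.succ|} with hdIdef
  have hnbar : NB = Real.sqrt (∑ i, dI i ^ 2) := rfl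
  have hNB0 : 0 ≤ NB := Real.sqrt_nonneg _
  have hdI0 : ∀ i, 0 ≤ dI i := fun i =>
    le_trans (abs_nonneg _) (le_csSup (hbddI i) ⟨k0, l0, k0, hk0l0, rfl⟩)
  have hNB2 : NB ^ 2 = ∑ i, dI i ^ 2 := by
    rw [hnbar]
    exact Real.sq_sqrt (Finset.sum_nonneg fun i _ => sq_nonneg _)
  have htauS : CrowdDS.tauMax f a q p j = sSup {x : ℝ | ∃ k l : Fin L, k ≠ l ∧
      x = CrowdDS.gap f a q p j k l / NB} := rfl
  -- NB > 0
  have hNBpos : 0 < NB := by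
    rcases eq_or_lt_of_le hNB0 with h | h
    · exfalso
      have hS : {x : ℝ | ∃ k l : Fin L, k ≠ l ∧ x = CrowdDS.gap f a q p j k l / NB}
          = {0} := by
        ext x
        simp only [Set.mem_setOf_eq, Set.mem_singleton_iff]
        constructor
        · rintro ⟨k, l, -, rfl⟩
          rw [← h, div_zero]
        · rintro rfl
          exact ⟨k0, l0, hk0l0, by rw [← h, div_zero]⟩
      rw [htauS, hS, csSup_singleton] at htau
      exact lt_irrefl _ htau
    · exact h
  have hgapτ : ∀ k l' : Fin L, k ≠ l' →
      CrowdDS.gap f a q p j k l' ≤ CrowdDS.tauMax f a q p j * NB := by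
    intro k l' hkl
    have hmem : CrowdDS.gap f a q p j k l' / NB ∈
        {x : ℝ | ∃ k l : Fin L, k ≠ l ∧ x = CrowdDS.gap f a q p j k l / NB} :=
      ⟨k, l', hkl, rfl⟩
    have := le_csSup hbddT hmem
    rw [← htauS] at this
    exact (div_le_iff₀ hNBpos).1 this
  set Cb : ℝ := sSup {x : ℝ | ∃ (i : Fin M) (k l h : Fin L), k ≠ l ∧
    x = |f i k h.succ - f i l h.succ|} with hCbdef
  have hcC : CrowdDS.cConst f = (1/NB) * Cb := rfl
  have hdICb : ∀ i, dI i ≤ Cb := fun i =>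
    csSup_le_csSup hbddC ⟨_, k0, l0, k0, hk0l0, rfl⟩
      (by rintro x ⟨k, l, h, hkl, rfl⟩; exact ⟨i, k, l, h, hkl, rfl⟩)
  have hCb0 : 0 ≤ Cb := le_trans (hdI0 ⟨0, hM⟩) (hdICb ⟨0, hM⟩)
  set V : ℝ := sSup {x : ℝ | ∃ (j' : Fin N) (k l : Fin L), k ≠ l ∧
    x = ∑ i, ∑ h : Fin L, q i j' * (f i k h.succ - f i l h.succ) ^ 2 * p i k h} with hVdef
  have hσeq : CrowdDS.sigmaSq f q p = (1 / NB ^ 2) * V := rfl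
  have hVel : ∀ k l' : Fin L, k ≠ l' →
      (∑ i, ∑ h : Fin L, q i j * (f i k h.succ - f i l' h.succ) ^ 2 * p i k h) ≤ V := by
    intro k l' hkl
    exact le_csSup hbddV ⟨j, k, l', hkl, rfl⟩
  have hV0 : 0 ≤ V := by
    refine le_trans ?_ (hVel k0 l0 hk0l0)
    refine Finset.sum_nonneg fun i _ => Finset.sum_nonneg fun h _ => ?_
    have := hq0 i j
    have := hp0 i k0 h
    positivity
  -- the alternative-label map
  set lb : Fin L → Fin L := fun k => if k = k0 then l0 else k0 with hlbdef
  have hlk : ∀ k, k ≠ lb k := by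
    intro k
    by_cases hk : k = k0
    · subst hk; rw [hlbdef]; simp only [if_pos rfl]; exact hk0l0
    · rw [hlbdef]; simp only [if_neg hk]; exact hk
  -- pmf facts
  have hW0 : ∀ (k : Fin L) (i : Fin M) (h' : Fin (L+1)),
      0 ≤ CrowdDS.condLaw q p i j k h' := by
    intro k i h'
    unfold CrowdDS.condLaw
    split_ifs with h
    · linarith [hq1 i j]
    · exact mul_nonneg (hq0 i j) (hp0 i k _)
  have hWsucc : ∀ (k : Fin L) (i : Fin M) (h : Fin L),
      CrowdDS.condLaw q p i j k h.succ = q i j * p i k h := by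
    intro k i h
    unfold CrowdDS.condLaw
    rw [dif_neg (Fin.succ_ne_zero h)]
    rw [Fin.pred_succ]
  have hW1 : ∀ (k : Fin L) (i : Fin M),
      ∑ h' : Fin (L+1), CrowdDS.condLaw q p i j k h' = 1 := by
    intro k i
    rw [Fin.sum_univ_succ]
    have h1 : CrowdDS.condLaw q p i j k 0 = 1 - q i j := by
      unfold CrowdDS.condLaw; rw [dif_pos rfl]
    rw [h1, Finset.sum_congr rfl (fun h _ => hWsucc k i h), ← Finset.mul_sum, hp1]
    ring
  -- bounds on score differences
  have hgd : ∀ (k : Fin L) (i : Fin M) (h' : Fin (L+1)),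
      |f i k h' - f i (lb k) h'| ≤ dI i := by
    intro k i h'
    induction h' using Fin.cases with
    | zero => rw [hf0 i k (lb k), sub_self, abs_zero]; exact hdI0 i
    | succ hh => exact le_csSup (hbddI i) ⟨k, lb k, hh, hlk k, rfl⟩
  have hgC : ∀ (k : Fin L) (i : Fin M) (h' : Fin (L+1)),
      |f i k h' - f i (lb k) h'| ≤ Cb := fun k i h' => le_trans (hgd k i h') (hdICb i)
  -- mean and variance formulas
  have hm : ∀ (k : Fin L) (i : Fin M),
      ∑ h' : Fin (L+1), CrowdDS.condLaw q p i j k h' * (f i k h' - f i (lb k) h')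
        = ∑ h : Fin L, q i j * (f i k h.succ - f i (lb k) h.succ) * p i k h := by
    intro k i
    rw [Fin.sum_univ_succ, hf0 i k (lb k), sub_self, mul_zero, zero_add]
    exact Finset.sum_congr rfl fun h _ => by rw [hWsucc]; ring
  have hv : ∀ (k : Fin L) (i : Fin M),
      ∑ h' : Fin (L+1), CrowdDS.condLaw q p i j k h' * (f i k h' - f i (lb k) h')^2
        = ∑ h : Fin L, q i j * (f i k h.succ - f i (lb k) h.succ)^2 * p i k h := by
    intro k i
    rw [Fin.sum_univ_succ, hf0 i k (lb k), sub_self]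
    norm_num
    exact Finset.sum_congr rfl fun h _ => by rw [hWsucc]; ring
  -- prior sums to 1
  have hpriSum : ∑ k : Fin L, pri k = 1 := by
    have hcov : (Set.univ : Set Ω) = ⋃ k : Fin L, {ω | y j ω = k} := by
      ext ω; simp only [Set.mem_univ, Set.mem_iUnion, Set.mem_setOf_eq, true_iff]
      exact ⟨y j ω, rfl⟩
    have hdisj : Pairwise (Function.onFun Disjoint (fun k : Fin L => {ω | y j ω = k})) := by
      intro k k' hkk'
      rw [Function.onFun, Set.disjoint_left]
      rintro ω (h1 : y j ω = k) (h2 : y j ω = k')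
      exact hkk' (h1 ▸ h2 ▸ rfl)
    have hmeask : ∀ k : Fin L, MeasurableSet {ω | y j ω = k} := fun k =>
      hym j (measurableSet_singleton k)
    have h1 : (1 : ℝ≥0∞) = ∑ k : Fin L, μ {ω | y j ω = k} := by
      rw [← measure_univ (μ := μ), hcov, measure_iUnion hdisj hmeask, tsum_fintype]
    have h2 : (1 : ℝ) = ∑ k : Fin L, (μ {ω | y j ω = k}).toReal := by
      have := congrArg ENNReal.toReal h1
      rwa [ENNReal.toReal_one, ENNReal.toReal_sum
        (fun k _ => measure_ne_top μ _)] at this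
    rw [h2]
    exact Finset.sum_congr rfl fun k _ => (hprior j k).symm
  -- the correct-classification event
  set Ceq : Set Ω := {ω | yhat j ω = y j ω} with hCeqdef
  have hCm : MeasurableSet Ceq := by
    have : Ceq = ⋃ k : Fin L, ({ω | yhat j ω = k} ∩ {ω | y j ω = k}) := by
      ext ω
      simp only [hCeqdef, Set.mem_setOf_eq, Set.mem_iUnion, Set.mem_inter_iff]
      constructor
      · intro h; exact ⟨y j ω, h, rfl⟩
      · rintro ⟨k, h1, h2⟩; rw [h1, h2]
    rw [this]
    exact MeasurableSet.iUnion fun k =>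
      (hyhatm j (measurableSet_singleton k)).inter (hym j (measurableSet_singleton k))
  -- KEY inequality: Chernoff-type decomposition
  have key : ∀ lam : ℝ, 0 ≤ lam →
      (μ Ceq).toReal ≤ ∑ k : Fin L, pri k * Real.exp (lam * (a k - a (lb k))) *
        ∏ i, ∑ h' : Fin (L+1), CrowdDS.condLaw q p i j k h' *
          Real.exp (lam * (f i k h' - f i (lb k) h')) := by
    intro lam hlam
    set Φ : Fin L → (Fin M → Fin (L+1)) → Prop := fun k h =>
      0 ≤ (∑ i, (f i k (h i) - f i (lb k) (h i))) + (a k - a (lb k)) with hΦdef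
    set base : Fin L → (Fin M → Fin (L+1)) → Set Ω := fun k h =>
      {ω | y j ω = k ∧ ∀ i, Z i j ω = h i} with hbasedef
    set U : Fin L → (Fin M → Fin (L+1)) → Set Ω := fun k h =>
      ⋃ (_ : Φ k h), base k h with hUdef
    have hcover : Ceq ⊆ ⋃ k : Fin L, ⋃ h : Fin M → Fin (L+1), U k h := by
      intro ω hω
      have hy : yhat j ω = y j ω := hω
      refine Set.mem_iUnion.2 ⟨y j ω, Set.mem_iUnion.2 ⟨fun i => Z i j ω, ?_⟩⟩
      have hΦk : Φ (y j ω) (fun i => Z i j ω) := by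
        have h1 := hyhat j ω (lb (y j ω))
        rw [hy] at h1
        simp only [hΦdef]
        rw [Finset.sum_sub_distrib]
        linarith
      rw [hUdef]
      exact Set.mem_iUnion_of_mem hΦk ⟨rfl, fun i => rfl⟩
    have hmeas1 : μ Ceq ≤ ∑ k : Fin L, ∑ h : Fin M → Fin (L+1), μ (U k h) := by
      refine le_trans (measure_mono hcover) (le_trans (measure_iUnion_le _) ?_)
      rw [tsum_fintype]
      exact Finset.sum_le_sum fun k _ =>
        le_trans (measure_iUnion_le _) (le_of_eq (tsum_fintype _))
    have hreal1 : (μ Ceq).toReal ≤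
        ∑ k : Fin L, ∑ h : Fin M → Fin (L+1), (μ (U k h)).toReal := by
      have hne : (∑ k : Fin L, ∑ h : Fin M → Fin (L+1), μ (U k h)) ≠ ⊤ := by
        refine (ENNReal.sum_lt_top.2 fun k _ => ENNReal.sum_lt_top.2
          fun h _ => measure_lt_top μ _).ne
      have := ENNReal.toReal_mono hne hmeas1
      rwa [ENNReal.toReal_sum (fun k _ => (ENNReal.sum_lt_top.2
          fun h _ => measure_lt_top μ _).ne),
        Finset.sum_congr rfl (fun k (_ : k ∈ Finset.univ) =>
          ENNReal.toReal_sum (fun h _ => measure_ne_top μ _))] at this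
    have hUb : ∀ (k : Fin L) (h : Fin M → Fin (L+1)), (μ (U k h)).toReal ≤
        Real.exp (lam * ((∑ i, (f i k (h i) - f i (lb k) (h i))) + (a k - a (lb k))))
          * (pri k * ∏ i, CrowdDS.condLaw q p i j k (h i)) := by
      intro k h
      have hnn : 0 ≤ pri k * ∏ i, CrowdDS.condLaw q p i j k (h i) :=
        mul_nonneg (hpri k) (Finset.prod_nonneg fun i _ => hW0 k i (h i))
      by_cases hφ : Φ k h
      · have hUeq : U k h = base k h := by
          haveI : Nonempty (Φ k h) := ⟨hφ⟩
          rw [hUdef]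
          exact Set.iUnion_const _
        rw [hUeq, hbasedef]
        rw [hlaw j k h]
        exact le_mul_of_one_le_left hnn (Real.one_le_exp (mul_nonneg hlam hφ))
      · have hUeq : U k h = ∅ := by
          rw [hUdef]
          exact Set.iUnion_eq_empty.2 fun hh => absurd hh hφ
        rw [hUeq]
        simp only [measure_empty, ENNReal.toReal_zero]
        exact mul_nonneg (Real.exp_pos _).le hnn
    refine le_trans hreal1 (le_trans (Finset.sum_le_sum fun k _ =>
      Finset.sum_le_sum fun h _ => hUb k h) (le_of_eq ?_))
    refine Finset.sum_congr rfl fun k _ => ?_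
    have h1 : ∏ i, ∑ h' : Fin (L+1), CrowdDS.condLaw q p i j k h' *
        Real.exp (lam * (f i k h' - f i (lb k) h'))
        = ∑ h ∈ Fintype.piFinset (fun _ : Fin M => (Finset.univ : Finset (Fin (L+1)))),
          ∏ i, (CrowdDS.condLaw q p i j k (h i) *
            Real.exp (lam * (f i k (h i) - f i (lb k) (h i)))) :=
      Finset.prod_univ_sum _ _
    rw [h1, Fintype.piFinset_univ, Finset.mul_sum]
    refine Finset.sum_congr rfl fun h _ => ?_
    rw [show lam * ((∑ i, (f i k (h i) - f i (lb k) (h i))) + (a k - a (lb k)))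
        = (∑ i, lam * (f i k (h i) - f i (lb k) (h i))) + lam * (a k - a (lb k)) by
      rw [mul_add, Finset.mul_sum]]
    rw [Real.exp_add, Real.exp_sum, Finset.prod_mul_distrib]
    ring
  -- generic reduction step
  have step : ∀ (lam : ℝ) (ri : Fin L → Fin M → ℝ) (R : ℝ), 0 ≤ lam →
      (∀ (k : Fin L) (i : Fin M), ∑ h' : Fin (L+1), CrowdDS.condLaw q p i j k h' *
        Real.exp (lam * (f i k h' - f i (lb k) h')) ≤ Real.exp (ri k i)) →
      (∀ k : Fin L, lam * (a k - a (lb k)) + ∑ i, ri k i ≤ R) →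
      (μ Ceq).toReal ≤ Real.exp R := by
    intro lam ri R hlam hmgf hexp
    refine le_trans (key lam hlam) ?_
    have hk : ∀ k ∈ (Finset.univ : Finset (Fin L)),
        pri k * Real.exp (lam * (a k - a (lb k))) *
          (∏ i, ∑ h' : Fin (L+1), CrowdDS.condLaw q p i j k h' *
            Real.exp (lam * (f i k h' - f i (lb k) h')))
        ≤ pri k * Real.exp R := by
      intro k _
      have hprod : (∏ i, ∑ h' : Fin (L+1), CrowdDS.condLaw q p i j k h' *
          Real.exp (lam * (f i k h' - f i (lb k) h'))) ≤ ∏ i, Real.exp (ri k i) := by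
        refine Finset.prod_le_prod (fun i _ => Finset.sum_nonneg fun h' _ =>
          mul_nonneg (hW0 k i h') (Real.exp_pos _).le) (fun i _ => hmgf k i)
      rw [← Real.exp_sum] at hprod
      calc pri k * Real.exp (lam * (a k - a (lb k))) *
            (∏ i, ∑ h' : Fin (L+1), CrowdDS.condLaw q p i j k h' *
              Real.exp (lam * (f i k h' - f i (lb k) h')))
          ≤ pri k * Real.exp (lam * (a k - a (lb k))) * Real.exp (∑ i, ri k i) := by
            refine mul_le_mul_of_nonneg_left hprod
              (mul_nonneg (hpri k) (Real.exp_pos _).le)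
        _ = pri k * Real.exp (lam * (a k - a (lb k)) + ∑ i, ri k i) := by
            rw [mul_assoc, ← Real.exp_add]
        _ ≤ pri k * Real.exp R :=
            mul_le_mul_of_nonneg_left (Real.exp_le_exp.2 (hexp k)) (hpri k)
    refine le_trans (Finset.sum_le_sum hk) ?_
    rw [← Finset.sum_mul, hpriSum, one_mul]
  -- Bound A (Hoeffding)
  have hA : (μ Ceq).toReal ≤ Real.exp (-(CrowdDS.tauMax f a q p j) ^ 2 / 2) := by
    set τ : ℝ := CrowdDS.tauMax f a q p j with hτdef
    set lam : ℝ := -τ / NB with hlamdef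
    have hlam : 0 ≤ lam := div_nonneg (by linarith) hNB0
    refine step lam (fun k i => lam * (∑ h' : Fin (L+1), CrowdDS.condLaw q p i j k h' *
      (f i k h' - f i (lb k) h')) + lam^2 * (dI i)^2/2) _ hlam
      (fun k i => DSAux.mgfA _ _ (hW0 k i) (hW1 k i) (dI i) lam (hgd k i)) ?_
    intro k
    have hsum : ∑ i, (lam * (∑ h' : Fin (L+1), CrowdDS.condLaw q p i j k h' *
        (f i k h' - f i (lb k) h')) + lam^2 * (dI i)^2/2)
        = lam * (∑ i, ∑ h : Fin L, q i j * (f i k h.succ - f i (lb k) h.succ) * p i k h)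
          + lam^2 * NB^2/2 := by
      rw [Finset.sum_add_distrib]
      congr 1
      · rw [Finset.mul_sum]
        exact Finset.sum_congr rfl fun i _ => congrArg (lam * ·) (hm k i)
      · rw [hNB2, Finset.mul_sum, Finset.sum_div]
    rw [hsum]
    have hgap : (∑ i, ∑ h : Fin L, q i j * (f i k h.succ - f i (lb k) h.succ) * p i k h)
        + (a k - a (lb k)) = CrowdDS.gap f a q p j k (lb k) := rfl
    have h2 : lam * (a k - a (lb k)) + (lam * (∑ i, ∑ h : Fin L,
        q i j * (f i k h.succ - f i (lb k) h.succ) * p i k h) + lam^2 * NB^2/2)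
        = lam * CrowdDS.gap f a q p j k (lb k) + lam^2 * NB^2/2 := by
      rw [← hgap]; ring
    rw [h2]
    have h3 : lam * CrowdDS.gap f a q p j k (lb k) ≤ lam * (τ * NB) :=
      mul_le_mul_of_nonneg_left (hgapτ k (lb k) (hlk k)) hlam
    have h4 : lam * (τ * NB) + lam^2 * NB^2/2 = -τ^2/2 := by
      rw [hlamdef]
      field_simp
      ring
    linarith
  -- Bound B (Bernstein)
  have hB : (μ Ceq).toReal ≤ Real.exp (-(CrowdDS.tauMax f a q p j) ^ 2 /
      (2 * (CrowdDS.sigmaSq f q p - CrowdDS.cConst f * CrowdDS.tauMax f a q p j / 3))) := by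
    set τ : ℝ := CrowdDS.tauMax f a q p j with hτdef
    set t : ℝ := -τ * NB with htdef
    have htpos : 0 < t := mul_pos (by linarith) hNBpos
    set D : ℝ := V + Cb * t / 3 with hDdef
    have hDnn : 0 ≤ D := by
      rw [hDdef]
      exact add_nonneg hV0 (div_nonneg (mul_nonneg hCb0 htpos.le) (by norm_num))
    have hdenom : CrowdDS.sigmaSq f q p - CrowdDS.cConst f * τ / 3 = D / NB^2 := by
      rw [hσeq, hcC, hDdef, htdef]
      field_simp
      ring
    rcases eq_or_lt_of_le hDnn with hD0 | hDpos
    · -- denominator is zero; bound is trivial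
      rw [hdenom, ← hD0]
      norm_num
      calc (μ Ceq).toReal ≤ (1 : ℝ≥0∞).toReal := ENNReal.toReal_mono ENNReal.one_ne_top prob_le_one
        _ = 1 := ENNReal.toReal_one
    · -- main Bernstein case
      have hgoal : -τ^2 / (2 * (CrowdDS.sigmaSq f q p - CrowdDS.cConst f * τ / 3))
          = -(t^2) / (2*D) := by
        rw [hdenom]
        field_simp [hNBpos.ne', hDpos.ne']
        ring
      -- choose lambda
      obtain ⟨lam, hlam0, hKpos, hfinal⟩ : ∃ lam : ℝ, 0 ≤ lam ∧ 0 < 1 - lam * Cb/3 ∧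
          lam * (τ * NB) + lam^2 * V / (2*(1 - lam * Cb/3)) ≤ -(t^2)/(2*D) := by
        rcases eq_or_lt_of_le hV0 with hV0' | hVpos
        · -- V = 0
          refine ⟨t/(2*D), by positivity, ?_, ?_⟩
          · have hCbt : Cb * t = 3 * D := by rw [hDdef, ← hV0']; ring
            have : t/(2*D) * Cb / 3 = 1/2 := by
              rw [div_mul_eq_mul_div, div_div, mul_comm t Cb, hCbt]
              rw [div_eq_div_iff (by positivity) (by norm_num : (2:ℝ) ≠ 0)]
              ring
            rw [this]; norm_num
          · have hCbt : Cb * t = 3 * D := by rw [hDdef, ← hV0']; ring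
            have h5 : (t/(2*D)) * (τ * NB) = -(t^2)/(2*D) := by
              rw [htdef]; field_simp [hDpos.ne']
            rw [h5, ← hV0']
            norm_num
        · -- V > 0
          refine ⟨t/D, by positivity, ?_, ?_⟩
          · have : t/D * Cb / 3 = (Cb * t/3)/D := by field_simp
            rw [this]
            rw [sub_pos, div_lt_one hDpos, hDdef]
            linarith
          · have hK : 1 - t/D * Cb/3 = V/D := by
              rw [eq_div_iff hDpos.ne', sub_mul, one_mul]
              rw [hDdef]
              field_simp [hDpos.ne']
              ring
            rw [hK]
            have h5 : (t/D) * (τ * NB) = -(t^2)/D := by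
              rw [htdef]; field_simp [hDpos.ne']
            have h6 : (t/D)^2 * V / (2*(V/D)) = t^2/(2*D) := by
              field_simp [hDpos.ne', hVpos.ne']
            rw [h5, h6]
            have h7 : -(t^2)/D + t^2/(2*D) = -(t^2)/(2*D) := by
              field_simp [hDpos.ne']
              ring
            linarith
      have hlamCb : lam * Cb < 3 := by nlinarith
      rw [hgoal]
      refine step lam (fun k i => lam * (∑ h' : Fin (L+1), CrowdDS.condLaw q p i j k h' *
        (f i k h' - f i (lb k) h')) + lam^2 * (∑ h' : Fin (L+1),
          CrowdDS.condLaw q p i j k h' * (f i k h' - f i (lb k) h')^2) /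
            (2*(1 - lam * Cb/3))) _ hlam0
        (fun k i => DSAux.mgfB _ _ (hW0 k i) (hW1 k i) Cb lam (hgC k i) hlam0 hlamCb) ?_
      intro k
      have hsum : ∑ i, (lam * (∑ h' : Fin (L+1), CrowdDS.condLaw q p i j k h' *
          (f i k h' - f i (lb k) h')) + lam^2 * (∑ h' : Fin (L+1),
            CrowdDS.condLaw q p i j k h' * (f i k h' - f i (lb k) h')^2) /
              (2*(1 - lam * Cb/3)))
          = lam * (∑ i, ∑ h : Fin L, q i j * (f i k h.succ - f i (lb k) h.succ) * p i k h)
            + lam^2 * (∑ i, ∑ h : Fin L, q i j * (f i k h.succ - f i (lb k) h.succ)^2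
              * p i k h) / (2*(1 - lam * Cb/3)) := by
        rw [Finset.sum_add_distrib]
        congr 1
        · rw [Finset.mul_sum]
          exact Finset.sum_congr rfl fun i _ => congrArg (lam * ·) (hm k i)
        · rw [Finset.mul_sum, Finset.sum_div]
          exact Finset.sum_congr rfl fun i _ => by
            rw [hv k i]
      rw [hsum]
      have hgap : (∑ i, ∑ h : Fin L, q i j * (f i k h.succ - f i (lb k) h.succ) * p i k h)
          + (a k - a (lb k)) = CrowdDS.gap f a q p j k (lb k) := rfl
      have h2 : lam * (a k - a (lb k)) + (lam * (∑ i, ∑ h : Fin L,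
          q i j * (f i k h.succ - f i (lb k) h.succ) * p i k h) + lam^2 * (∑ i, ∑ h : Fin L,
            q i j * (f i k h.succ - f i (lb k) h.succ)^2 * p i k h) / (2*(1 - lam * Cb/3)))
          = lam * CrowdDS.gap f a q p j k (lb k) + lam^2 * (∑ i, ∑ h : Fin L,
            q i j * (f i k h.succ - f i (lb k) h.succ)^2 * p i k h) / (2*(1 - lam * Cb/3)) := by
        rw [← hgap]; ring
      rw [h2]
      have h3 : lam * CrowdDS.gap f a q p j k (lb k) ≤ lam * (τ * NB) :=
        mul_le_mul_of_nonneg_left (hgapτ k (lb k) (hlk k)) hlam0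
      have h4 : lam^2 * (∑ i, ∑ h : Fin L,
          q i j * (f i k h.succ - f i (lb k) h.succ)^2 * p i k h) / (2*(1 - lam * Cb/3))
          ≤ lam^2 * V / (2*(1 - lam * Cb/3)) := by
        apply div_le_div_of_nonneg_right ?_ (by linarith)
        exact mul_le_mul_of_nonneg_left (hVel k (lb k) (hlk k)) (sq_nonneg lam)
      linarith
  -- put it together
  have hcompl : {ω | yhat j ω ≠ y j ω} = Ceqᶜ := rfl
  have herr : (μ {ω | yhat j ω ≠ y j ω}).toReal = 1 - (μ Ceq).toReal := by
    rw [hcompl, measure_compl hCm (measure_ne_top μ Ceq), measure_univ,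
      ENNReal.toReal_sub_of_le prob_le_one ENNReal.one_ne_top, ENNReal.toReal_one]
  rw [herr]
  have := le_min hA hB
  linarith
end
end
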